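/- arXiv:1605.00081 — 4 statements merged into one kernel-verified Lean document; each statement's English description precedes it below -/
import Mathlib

section
/- Let ⊗ be a continuous t-norm on [0,1] whose only idempotent elements are 0 and 1. Then: (1) if ⊗ has no nilpotent elements, there is a strictly increasing bijection φ : [0,1] → [0,1] with φ(x⊗y) = φ(x)·φ(y) for all x, y ∈ [0,1] (⊗ is isomorphic to multiplication); (2) if ⊗ has a nilpotent element, then every x with 0 < x < 1 is nilpotent, and there is a strictly increasing bijection φ : [0,1] → [0,1] with φ(x⊗y) = max(0, φ(x)+φ(y)−1) for all x, y ∈ [0,1] (⊗ is isomorphic to the Łukasiewicz tensor). -/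
open unitInterval Set Filter
open scoped Classical

/-- A continuous t-norm on the unit interval `[0,1]`. -/
structure ContinuousTNorm where
  mul : I → I → I
  comm : ∀ x y, mul x y = mul y x
  assoc : ∀ x y z, mul (mul x y) z = mul x (mul y z)
  mono : ∀ ⦃x₁ x₂ y₁ y₂ : I⦄, x₁ ≤ x₂ → y₁ ≤ y₂ → mul x₁ y₁ ≤ mul x₂ y₂
  continuous : Continuous fun p : I × I => mul p.1 p.2
  one_mul' : ∀ x, mul 1 x = x

/-- The `n`-fold `⊗`-power `xⁿ`. -/
def ContinuousTNorm.pow (T : ContinuousTNorm) (x : I) : ℕ → I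
  | 0 => 1
  | n + 1 => T.mul x (T.pow x n)

namespace ContinuousTNorm

variable (T : ContinuousTNorm)

lemma mul_one' (x : I) : T.mul x 1 = x := by rw [T.comm]; exact T.one_mul' x

lemma mul_le_left (x y : I) : T.mul x y ≤ x := by
  have := T.mono (le_refl x) (le_one' : y ≤ 1); rwa [T.mul_one'] at this

lemma zero_mul' (x : I) : T.mul 0 x = 0 :=
  le_antisymm (T.mul_le_left 0 x) (nonneg' )

lemma mul_zero' (x : I) : T.mul x 0 = 0 := by rw [T.comm]; exact T.zero_mul' x

lemma mul_le_right (x y : I) : T.mul x y ≤ y := by rw [T.comm]; exact T.mul_le_left y x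

lemma continuous_mul : Continuous fun p : I × I => T.mul p.1 p.2 := T.continuous

@[simp] lemma pow_zero' (x : I) : T.pow x 0 = 1 := rfl
lemma pow_succ' (x : I) (n : ℕ) : T.pow x (n+1) = T.mul x (T.pow x n) := rfl
lemma pow_one' (x : I) : T.pow x 1 = x := by rw [pow_succ', pow_zero', T.mul_one']

lemma pow_add' (x : I) (m n : ℕ) : T.pow x (m + n) = T.mul (T.pow x m) (T.pow x n) := by
  induction m with
  | zero => simp [T.one_mul']
  | succ m ih =>
      have : m + 1 + n = (m + n) + 1 := by omega
      rw [this, pow_succ', ih, pow_succ', T.assoc]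

lemma pow_two_mul (x : I) (k : ℕ) : T.pow x (2 * k) = T.pow (T.mul x x) k := by
  induction k with
  | zero => simp
  | succ k ih =>
      have : 2 * (k + 1) = 2 + 2 * k := by omega
      rw [this, pow_add', pow_succ', ih, pow_succ']
      congr 1
      show T.mul x (T.mul x (T.pow x 0)) = T.mul x x
      rw [pow_zero', T.mul_one']

lemma pow_mono_base {x y : I} (h : x ≤ y) (n : ℕ) : T.pow x n ≤ T.pow y n := by
  induction n with
  | zero => simp
  | succ n ih => exact T.mono h ih

lemma pow_anti (x : I) {m n : ℕ} (h : m ≤ n) : T.pow x n ≤ T.pow x m := by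
  obtain ⟨k, rfl⟩ := Nat.exists_eq_add_of_le h
  rw [pow_add']
  exact T.mul_le_left _ _

lemma pow_le_one (x : I) (n : ℕ) : T.pow x n ≤ 1 := le_one _

lemma one_pow (n : ℕ) : T.pow 1 n = 1 := by
  induction n with
  | zero => rfl
  | succ n ih => rw [pow_succ', ih, T.mul_one']

lemma continuous_mul_fun {α : Type*} [TopologicalSpace α] {f g : α → I}
    (hf : Continuous f) (hg : Continuous g) : Continuous fun a => T.mul (f a) (g a) :=
  T.continuous.comp (hf.prodMk hg)

lemma tendsto_coe_of_tendsto' {u : ℕ → I} {l : I}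
    (h : Tendsto (fun n => (u n : ℝ)) atTop (nhds (l : ℝ))) : Tendsto u atTop (nhds l) :=
  tendsto_subtype_rng.2 h

/-- For `x < 1`, powers tend to `0` (real-valued version). -/
lemma tendsto_pow_zero (hidem : ∀ x : I, T.mul x x = x → x = 0 ∨ x = 1)
    {x : I} (hx : x < 1) : Tendsto (fun n => ((T.pow x n : I) : ℝ)) atTop (nhds 0) := by
  set u : ℕ → ℝ := fun n => ((T.pow x n : I) : ℝ) with hu
  have hanti : Antitone u := antitone_nat_of_succ_le fun n => by
    exact (T.mono (le_one' : x ≤ 1) (le_refl (T.pow x n))).trans (le_of_eq (T.one_mul' _))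
  have hbdd : BddBelow (range u) := ⟨0, by rintro r ⟨n, rfl⟩; exact (T.pow x n).2.1⟩
  have hlim : Tendsto u atTop (nhds (⨅ n, u n)) := tendsto_atTop_ciInf hanti hbdd
  set l : ℝ := ⨅ n, u n with hl
  have hl0 : 0 ≤ l := le_ciInf fun n => (T.pow x n).2.1
  have hl1 : l ≤ 1 := (ciInf_le hbdd 0).trans (by simp [u])
  set L : I := ⟨l, hl0, hl1⟩ with hL
  have hlimI : Tendsto (fun n => T.pow x n) atTop (nhds L) := tendsto_coe_of_tendsto' hlim
  have h2 : Tendsto (fun n => T.pow x (n + n)) atTop (nhds L) :=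
    hlimI.comp (tendsto_atTop_mono (fun n => Nat.le_add_left n n) tendsto_id)
  have h3 : Tendsto (fun n => T.mul (T.pow x n) (T.pow x n)) atTop (nhds (T.mul L L)) :=
    (T.continuous.tendsto (L, L)).comp (hlimI.prodMk_nhds hlimI)
  have h4 : (fun n => T.pow x (n + n)) = fun n => T.mul (T.pow x n) (T.pow x n) := by
    funext n; exact T.pow_add' x n n
  rw [← h4] at h3
  have hLL : T.mul L L = L := tendsto_nhds_unique h3 h2
  rcases hidem L hLL with h | h
  · have hl' : l = 0 := by rw [show l = (L:ℝ) from rfl, h]; rfl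
    exact hl' ▸ hlim
  · exfalso
    have : l ≤ u 1 := ciInf_le hbdd 1
    rw [hu] at this
    simp only [T.pow_one'] at this
    have : (L : ℝ) ≤ (x : ℝ) := this
    rw [h] at this
    exact absurd (this.trans_lt hx) (lt_irrefl _)

/-- If `b ⊗ z = z` with `b < 1` then `z = 0`. -/
lemma eq_zero_of_mul_fixed (hidem : ∀ x : I, T.mul x x = x → x = 0 ∨ x = 1)
    {b z : I} (hb : b < 1) (h : T.mul b z = z) : z = 0 := by
  have hfix : ∀ n, T.mul (T.pow b n) z = z := by
    intro n; induction n with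
    | zero => rw [pow_zero', T.one_mul']
    | succ n ih => rw [pow_succ', T.assoc, ih, h]
  have hp : Tendsto (fun n => T.pow b n) atTop (nhds 0) :=
    tendsto_coe_of_tendsto' (by exact T.tendsto_pow_zero hidem hb)
  have h1 : Tendsto (fun n => T.mul (T.pow b n) z) atTop (nhds (T.mul 0 z)) :=
    (T.continuous.tendsto (0, z)).comp (hp.prodMk_nhds tendsto_const_nhds)
  rw [T.zero_mul'] at h1
  have h2 : Tendsto (fun n => T.mul (T.pow b n) z) atTop (nhds z) := by
    simp only [hfix]; exact tendsto_const_nhds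
  exact (tendsto_nhds_unique h2 h1)

/-- Decreasing intermediate value theorem for real-valued functions on `I`. -/
lemma ivt_dec {g : I → ℝ} {a b : I} (hab : a ≤ b) (hg : ContinuousOn g (Set.Icc a b))
    {t : ℝ} (h1 : g b ≤ t) (h2 : t ≤ g a) : ∃ u, a ≤ u ∧ u ≤ b ∧ g u = t := by
  let pr : ℝ → I := Set.projIcc (0:ℝ) 1 zero_le_one
  have hmaps : Set.MapsTo pr (Set.Icc (a:ℝ) (b:ℝ)) (Set.Icc a b) := by
    intro r hr
    have hr01 : r ∈ Set.Icc (0:ℝ) 1 := ⟨a.2.1.trans hr.1, hr.2.trans b.2.2⟩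
    constructor
    · exact le_of_eq_of_le (Set.projIcc_val zero_le_one a).symm
        (monotone_projIcc (zero_le_one (α := ℝ)) hr.1)
    · exact le_of_le_of_eq (monotone_projIcc (zero_le_one (α := ℝ)) hr.2)
        (Set.projIcc_val zero_le_one b)
  have hcont : ContinuousOn (g ∘ pr) (Set.Icc (a:ℝ) (b:ℝ)) :=
    hg.comp continuous_projIcc.continuousOn hmaps
  have hsub : Set.Icc ((g ∘ pr) (b:ℝ)) ((g ∘ pr) (a:ℝ)) ⊆ (g ∘ pr) '' Set.Icc (a:ℝ) (b:ℝ) :=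
    intermediate_value_Icc' (show (a:ℝ) ≤ (b:ℝ) from hab) hcont
  have hpa : pr (a:ℝ) = a := Set.projIcc_val _ _
  have hpb : pr (b:ℝ) = b := Set.projIcc_val _ _
  have ht : t ∈ Set.Icc ((g ∘ pr) (b:ℝ)) ((g ∘ pr) (a:ℝ)) := by
    simp only [Function.comp, hpa, hpb]; exact ⟨h1, h2⟩
  obtain ⟨r, hr, hgr⟩ := hsub ht
  refine ⟨pr r, ?_, ?_, hgr⟩
  · exact le_of_eq_of_le hpa.symm (monotone_projIcc (zero_le_one (α := ℝ)) hr.1)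
  · exact le_of_le_of_eq (monotone_projIcc (zero_le_one (α := ℝ)) hr.2) hpb

/-- Increasing intermediate value theorem. -/
lemma ivt_inc {g : I → ℝ} {a b : I} (hab : a ≤ b) (hg : ContinuousOn g (Set.Icc a b))
    {t : ℝ} (h1 : g a ≤ t) (h2 : t ≤ g b) : ∃ u, a ≤ u ∧ u ≤ b ∧ g u = t := by
  obtain ⟨u, h3, h4, h5⟩ := ivt_dec (g := fun z => -(g z)) hab (hg.neg) (t := -t)
    (by simpa using h2) (by simpa using h1)
  exact ⟨u, h3, h4, by linarith [neg_eq_iff_eq_neg.1 h5]⟩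

/-- Solve `y ⊗ u = x` when `x ≤ y`. -/
lemma exists_mul_eq {x y : I} (hx : x ≤ y) : ∃ u, T.mul y u = x := by
  obtain ⟨u, -, -, hu⟩ := ivt_inc (g := fun z => (T.mul y z : ℝ)) (a := 0) (b := 1)
    zero_le_one ((continuous_subtype_val.comp (T.continuous_mul_fun continuous_const
      continuous_id)).continuousOn)
    (t := (x : ℝ))
    (by show (T.mul y 0 : ℝ) ≤ (x:ℝ); rw [T.mul_zero']; exact x.2.1)
    (by show (x:ℝ) ≤ (T.mul y 1 : ℝ); rw [T.mul_one']; exact hx)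
  exact ⟨u, Subtype.ext hu⟩

lemma exists_sqrt (x : I) : ∃ y, T.mul y y = x := by
  obtain ⟨u, -, -, hu⟩ := ivt_inc (g := fun z => (T.mul z z : ℝ)) (a := 0) (b := 1)
    zero_le_one ((continuous_subtype_val.comp (T.continuous_mul_fun continuous_id
      continuous_id)).continuousOn)
    (t := (x : ℝ))
    (by show (T.mul 0 0 : ℝ) ≤ (x:ℝ); rw [T.mul_zero']; exact x.2.1)
    (by show (x:ℝ) ≤ (T.mul 1 1 : ℝ); rw [T.mul_one']; exact x.2.2)
  exact ⟨u, Subtype.ext hu⟩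

/-- The sequence of iterated square roots of `1/2`. -/
noncomputable def rt : ℕ → I := fun n =>
  Nat.rec (motive := fun _ => I) ⟨1/2, by norm_num⟩
    (fun _ ih => Classical.choose (T.exists_sqrt ih)) n

lemma rt_sq (n : ℕ) : T.mul (T.rt (n+1)) (T.rt (n+1)) = T.rt n :=
  Classical.choose_spec (T.exists_sqrt (T.rt n))

lemma rt_zero : (T.rt 0 : ℝ) = 1/2 := rfl

lemma rt_pos (n : ℕ) : 0 < T.rt n := by
  induction n with
  | zero =>
      refine lt_of_le_of_ne nonneg' fun h => ?_
      have : ((0:I):ℝ) = 1/2 := by rw [h, T.rt_zero]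
      norm_num at this
  | succ n ih =>
      refine lt_of_le_of_ne nonneg' fun h => ?_
      have := T.rt_sq n
      rw [← h, T.zero_mul'] at this
      exact absurd this.symm (ne_of_gt ih)

lemma rt_lt_one (n : ℕ) : T.rt n < 1 := by
  induction n with
  | zero =>
      refine lt_of_le_of_ne le_one' fun h => ?_
      have : (1/2 : ℝ) = ((1:I):ℝ) := by rw [← T.rt_zero, h]
      norm_num at this
  | succ n ih =>
      refine lt_of_le_of_ne le_one' fun h => ?_
      have := T.rt_sq n
      rw [h, T.mul_one'] at this
      exact absurd this (ne_of_gt ih)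

lemma rt_mono : Monotone T.rt := by
  apply monotone_nat_of_le_succ
  intro n
  calc T.rt n = T.mul (T.rt (n+1)) (T.rt (n+1)) := (T.rt_sq n).symm
    _ ≤ T.mul 1 (T.rt (n+1)) := T.mono le_one' (le_refl _)
    _ = T.rt (n+1) := T.one_mul' _

lemma tendsto_rt_one (hidem : ∀ x : I, T.mul x x = x → x = 0 ∨ x = 1) :
    Tendsto (fun n => (T.rt n : ℝ)) atTop (nhds 1) := by
  set u : ℕ → ℝ := fun n => (T.rt n : ℝ) with hu
  have hmono : Monotone u := fun m n h => T.rt_mono h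
  have hbdd : BddAbove (range u) := ⟨1, by rintro r ⟨n, rfl⟩; exact (T.rt n).2.2⟩
  have hlim : Tendsto u atTop (nhds (⨆ n, u n)) := tendsto_atTop_ciSup hmono hbdd
  set l : ℝ := ⨆ n, u n with hl
  have hl0 : 0 ≤ l := le_ciSup_of_le hbdd 0 (T.rt 0).2.1
  have hl1 : l ≤ 1 := ciSup_le fun n => (T.rt n).2.2
  set L : I := ⟨l, hl0, hl1⟩ with hL
  have hlimI : Tendsto T.rt atTop (nhds L) := tendsto_coe_of_tendsto' hlim
  have hsucc : Tendsto (fun n => T.rt (n+1)) atTop (nhds L) :=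
    hlimI.comp (tendsto_add_atTop_nat 1)
  have h3 : Tendsto (fun n => T.mul (T.rt (n+1)) (T.rt (n+1))) atTop (nhds (T.mul L L)) :=
    (T.continuous.tendsto (L, L)).comp (hsucc.prodMk_nhds hsucc)
  rw [show (fun n => T.mul (T.rt (n+1)) (T.rt (n+1))) = fun n => T.rt n from
    funext fun n => T.rt_sq n] at h3
  have hLL : T.mul L L = L := tendsto_nhds_unique h3 hlimI
  rcases hidem L hLL with h | h
  · exfalso
    have : u 0 ≤ l := le_ciSup hbdd 0
    have h0 : (T.rt 0 : ℝ) ≤ (L : ℝ) := this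
    rw [h, T.rt_zero] at h0
    norm_num at h0
  · have hl' : l = 1 := by rw [show l = (L:ℝ) from rfl, h]; rfl
    exact hl' ▸ hlim

/-- Minimal `k` with `aᵏ ≤ x` (junk value `0` if none exists). -/
noncomputable def kk (a x : I) : ℕ :=
  if h : ∃ k, T.pow a k ≤ x then Nat.find h else 0

lemma kk_spec {a x : I} (h : ∃ k, T.pow a k ≤ x) : T.pow a (T.kk a x) ≤ x := by
  rw [kk, dif_pos h]; exact Nat.find_spec h

lemma kk_min' {a x : I} (h : ∃ k, T.pow a k ≤ x) {j : ℕ} (hj : T.pow a j ≤ x) :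
    T.kk a x ≤ j := by
  rw [kk, dif_pos h]; exact Nat.find_min' h hj

lemma lt_of_lt_kk {a x : I} (h : ∃ k, T.pow a k ≤ x) {j : ℕ} (hj : j < T.kk a x) :
    x < T.pow a j := by
  rw [kk, dif_pos h] at hj
  exact not_le.1 (Nat.find_min h hj)

lemma kk_antitone {a x y : I} (hx : ∃ k, T.pow a k ≤ x) (hxy : x ≤ y) :
    T.kk a y ≤ T.kk a x :=
  T.kk_min' (hx.imp fun k hk => hk.trans hxy) ((T.kk_spec hx).trans hxy)

lemma kk_one (a : I) : T.kk a 1 = 0 :=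
  Nat.le_zero.1 (T.kk_min' ⟨0, le_one'⟩ (le_one' : T.pow a 0 ≤ 1))

lemma kk_pow_self (hidem : ∀ x : I, T.mul x x = x → x = 0 ∨ x = 1)
    {a : I} (ha : a < 1) {j : ℕ} (hj : T.pow a j ≠ 0) : T.kk a (T.pow a j) = j := by
  have hex : ∃ k, T.pow a k ≤ T.pow a j := ⟨j, le_refl _⟩
  refine le_antisymm (T.kk_min' hex (le_refl _)) ?_
  by_contra hlt
  push_neg at hlt
  set i := T.kk a (T.pow a j) with hi
  have h1 : T.pow a i ≤ T.pow a j := T.kk_spec hex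
  have h2 : T.pow a j ≤ T.pow a i := T.pow_anti a hlt.le
  have heq : T.pow a i = T.pow a j := le_antisymm h1 h2
  have hfix : T.mul (T.pow a (j - i)) (T.pow a j) = T.pow a j := by
    conv_lhs => rw [← heq, ← T.pow_add' a (j - i) i]
    rw [show j - i + i = j from by omega]
  have hb : T.pow a (j - i) < 1 := by
    refine lt_of_le_of_lt ((T.pow_anti a (show 1 ≤ j - i from by omega)).trans ?_) ha
    rw [T.pow_one']
  exact hj (T.eq_zero_of_mul_fixed hidem hb hfix)

lemma kk_mul_le {a x y : I} (hx : ∃ k, T.pow a k ≤ x) (hy : ∃ k, T.pow a k ≤ y)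
    (hxy : ∃ k, T.pow a k ≤ T.mul x y) :
    T.kk a (T.mul x y) ≤ T.kk a x + T.kk a y := by
  refine T.kk_min' hxy ?_
  rw [T.pow_add']
  exact T.mono (T.kk_spec hx) (T.kk_spec hy)

lemma kk_mul_ge (hidem : ∀ x : I, T.mul x x = x → x = 0 ∨ x = 1)
    {a x y : I} (ha : a < 1) (hx : ∃ k, T.pow a k ≤ x) (hy : ∃ k, T.pow a k ≤ y)
    (hxy : ∃ k, T.pow a k ≤ T.mul x y)
    (hne : T.pow a (T.kk a (T.mul x y)) ≠ 0) :
    T.kk a x + T.kk a y ≤ T.kk a (T.mul x y) + 2 := by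
  set m := T.kk a (T.mul x y) with hm
  set kx := T.kk a x with hkx
  set ky := T.kk a y with hky
  rcases Nat.eq_zero_or_pos kx with h0 | hkx1
  · have : ky ≤ m := T.kk_min' hy ((T.kk_spec hxy).trans (T.mul_le_right x y))
    omega
  rcases Nat.eq_zero_or_pos ky with h0 | hky1
  · have : kx ≤ m := T.kk_min' hx ((T.kk_spec hxy).trans (T.mul_le_left x y))
    omega
  by_contra hcon
  push_neg at hcon
  have hs : m < kx + ky - 2 := by omega
  set s := kx + ky - 2 with hsdef
  have hxle : x ≤ T.pow a (kx - 1) := (T.lt_of_lt_kk hx (by omega)).le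
  have hyle : y ≤ T.pow a (ky - 1) := (T.lt_of_lt_kk hy (by omega)).le
  have h1 : T.pow a m ≤ T.pow a s := by
    refine (T.kk_spec hxy).trans ?_
    have : T.mul x y ≤ T.mul (T.pow a (kx - 1)) (T.pow a (ky - 1)) := T.mono hxle hyle
    rwa [← T.pow_add', show kx - 1 + (ky - 1) = s from by omega] at this
  have heq : T.pow a m = T.pow a s := le_antisymm h1 (T.pow_anti a hs.le)
  have hfix : T.mul (T.pow a (s - m)) (T.pow a m) = T.pow a m := by
    conv_lhs => rw [← T.pow_add' a (s - m) m]
    rw [show s - m + m = s from by omega, heq]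
  have hb : T.pow a (s - m) < 1 := by
    refine lt_of_le_of_lt ((T.pow_anti a (show 1 ≤ s - m from by omega)).trans ?_) ha
    rw [T.pow_one']
  exact hne (T.eq_zero_of_mul_fixed hidem hb hfix)

lemma hex_succ {n : ℕ} {x : I} (h : ∃ k, T.pow (T.rt n) k ≤ x) :
    ∃ k, T.pow (T.rt (n+1)) k ≤ x := by
  obtain ⟨k, hk⟩ := h
  exact ⟨2 * k, by rw [T.pow_two_mul, T.rt_sq]; exact hk⟩

lemma hex_mono {n m : ℕ} (hnm : n ≤ m) {x : I} (h : ∃ k, T.pow (T.rt n) k ≤ x) :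
    ∃ k, T.pow (T.rt m) k ≤ x := by
  induction m with
  | zero => rwa [Nat.le_zero.1 hnm] at h
  | succ m ih =>
      rcases Nat.lt_or_ge n (m+1) with h1 | h1
      · exact T.hex_succ (ih (by omega))
      · rwa [show n = m + 1 from by omega] at h

lemma kk_succ_le {n : ℕ} {x : I} (h : ∃ k, T.pow (T.rt n) k ≤ x) :
    T.kk (T.rt (n+1)) x ≤ 2 * T.kk (T.rt n) x :=
  T.kk_min' (T.hex_succ h) (by rw [T.pow_two_mul, T.rt_sq]; exact T.kk_spec h)

lemma kk_succ_ge {n : ℕ} {x : I} (h : ∃ k, T.pow (T.rt n) k ≤ x) :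
    2 * T.kk (T.rt n) x ≤ T.kk (T.rt (n+1)) x + 1 := by
  set kn := T.kk (T.rt n) x with hkn
  rcases Nat.eq_zero_or_pos kn with h0 | h1
  · omega
  by_contra hcon
  push_neg at hcon
  have h2 : T.kk (T.rt (n+1)) x ≤ 2 * (kn - 1) := by omega
  have h3 : T.pow (T.rt (n+1)) (2 * (kn - 1)) ≤ x :=
    (T.pow_anti _ h2).trans (T.kk_spec (T.hex_succ h))
  rw [T.pow_two_mul, T.rt_sq] at h3
  exact absurd h3 (not_le.2 (T.lt_of_lt_kk h (by omega)))

/-- Dyadic approximation of the additive generator. -/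
noncomputable def fn (n : ℕ) (x : I) : ℝ := (T.kk (T.rt n) x : ℝ) / 2 ^ n

/-- The additive generator. -/
noncomputable def ff (x : I) : ℝ := ⨅ n, T.fn n x

lemma fn_nonneg (n : ℕ) (x : I) : 0 ≤ T.fn n x := by
  apply div_nonneg (Nat.cast_nonneg _) (by positivity)

lemma fn_succ_le {n : ℕ} {x : I} (h : ∃ k, T.pow (T.rt n) k ≤ x) :
    T.fn (n+1) x ≤ T.fn n x := by
  have h2 : (T.kk (T.rt (n+1)) x : ℝ) ≤ 2 * (T.kk (T.rt n) x : ℝ) := by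
    exact_mod_cast T.kk_succ_le h
  rw [fn, fn, div_le_div_iff₀ (by positivity) (by positivity), pow_succ]
  nlinarith [(by positivity : (0:ℝ) < (2:ℝ)^n)]

lemma fn_le_succ_add {n : ℕ} {x : I} (h : ∃ k, T.pow (T.rt n) k ≤ x) :
    T.fn n x ≤ T.fn (n+1) x + 1 / 2 ^ (n+1) := by
  have h2 : 2 * (T.kk (T.rt n) x : ℝ) ≤ (T.kk (T.rt (n+1)) x : ℝ) + 1 := by
    exact_mod_cast T.kk_succ_ge h
  rw [fn, fn, ← add_div, div_le_div_iff₀ (by positivity) (by positivity), pow_succ]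
  nlinarith [(by positivity : (0:ℝ) < (2:ℝ)^n)]

lemma fn_anti_n {x : I} (hx : ∀ m, ∃ k, T.pow (T.rt m) k ≤ x) {n m : ℕ} (hnm : n ≤ m) :
    T.fn m x ≤ T.fn n x := by
  induction m with
  | zero => rw [Nat.le_zero.1 hnm]
  | succ m ih =>
      rcases Nat.lt_or_ge n (m+1) with h1 | h1
      · exact (T.fn_succ_le (hx m)).trans (ih (by omega))
      · rw [show n = m + 1 from by omega]

lemma fn_ge_telescope {x : I} (hx : ∀ m, ∃ k, T.pow (T.rt m) k ≤ x) (n : ℕ) :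
    ∀ m, T.fn n x - 1 / 2 ^ n ≤ T.fn m x := by
  have key : ∀ m, n ≤ m → T.fn n x ≤ T.fn m x + (1 / 2 ^ n - 1 / 2 ^ m) := by
    intro m
    induction m with
    | zero => intro h; rw [Nat.le_zero.1 h]; simp
    | succ m ih =>
        intro h
        rcases Nat.lt_or_ge n (m+1) with h1 | h1
        · have h2 := ih (by omega)
          have h3 := T.fn_le_succ_add (x := x) (n := m) (hx m)
          have : (1:ℝ) / 2 ^ (m+1) = (1 / 2 ^ m) - 1 / 2 ^ (m+1) := by
            rw [pow_succ]; field_simp; ring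
          linarith
        · rw [show n = m + 1 from by omega]; simp
  intro m
  rcases Nat.lt_or_ge m n with h1 | h1
  · have h2 := T.fn_anti_n hx h1.le
    have h3 : (0:ℝ) < 1 / 2 ^ n := by positivity
    linarith
  · have h2 := key m h1
    have h3 : (0:ℝ) ≤ 1 / 2 ^ m := by positivity
    linarith

lemma ff_bddBelow (x : I) : BddBelow (range fun n => T.fn n x) :=
  ⟨0, by rintro r ⟨n, rfl⟩; exact T.fn_nonneg n x⟩

lemma ff_le_fn (n : ℕ) (x : I) : T.ff x ≤ T.fn n x := ciInf_le (T.ff_bddBelow x) n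

lemma fn_le_ff_add {x : I} (hx : ∀ m, ∃ k, T.pow (T.rt m) k ≤ x) (n : ℕ) :
    T.fn n x ≤ T.ff x + 1 / 2 ^ n := by
  have := le_ciInf (T.fn_ge_telescope hx n)
  rw [ff]
  linarith

lemma ff_nonneg (x : I) : 0 ≤ T.ff x := le_ciInf fun n => T.fn_nonneg n x

lemma ff_antitone {x y : I} (hx : ∀ m, ∃ k, T.pow (T.rt m) k ≤ x) (hxy : x ≤ y) :
    T.ff y ≤ T.ff x := by
  refine le_ciInf fun n => ?_
  refine (T.ff_le_fn n y).trans ?_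
  rw [fn, fn]
  have h2 : (T.kk (T.rt n) y : ℝ) ≤ (T.kk (T.rt n) x : ℝ) := by
    exact_mod_cast T.kk_antitone (hx n) hxy
  gcongr

lemma ff_one : T.ff 1 = 0 := by
  have h : ∀ n, T.fn n 1 = 0 := fun n => by rw [fn, T.kk_one]; simp
  rw [ff]
  simp only [h]
  exact ciInf_const

lemma eq_of_abs_sub_le {A B : ℝ} (C : ℝ) (h : ∀ n : ℕ, |A - B| ≤ C / 2 ^ n) : A = B := by
  have h0 : Tendsto (fun n : ℕ => C / 2 ^ n) atTop (nhds 0) :=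
    tendsto_const_nhds.div_atTop (tendsto_pow_atTop_atTop_of_one_lt one_lt_two)
  have h1 : |A - B| ≤ 0 := ge_of_tendsto' h0 h
  have h2 : |A - B| = 0 := le_antisymm h1 (abs_nonneg _)
  have := abs_eq_zero.1 h2
  linarith

lemma tendsto_rtI (hidem : ∀ x : I, T.mul x x = x → x = 0 ∨ x = 1) :
    Tendsto T.rt atTop (nhds 1) :=
  tendsto_coe_of_tendsto' (T.tendsto_rt_one hidem)

lemma continuous_pow_base (k : ℕ) : Continuous fun z : I => T.pow z k := by
  induction k with
  | zero => exact continuous_const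
  | succ k ih => exact T.continuous_mul_fun continuous_id ih

lemma tendsto_pow_rt (hidem : ∀ x : I, T.mul x x = x → x = 0 ∨ x = 1) (k : ℕ) :
    Tendsto (fun n => T.pow (T.rt n) k) atTop (nhds 1) := by
  have h := ((T.continuous_pow_base k).tendsto 1).comp (T.tendsto_rtI hidem)
  rwa [show T.pow 1 k = 1 from T.one_pow k] at h

lemma exists_rt_pow_gt (hidem : ∀ x : I, T.mul x x = x → x = 0 ∨ x = 1)
    {x : I} (hx : x < 1) (k : ℕ) : ∃ n, x < T.pow (T.rt n) k := by
  have h := (continuous_subtype_val.tendsto (1:I)).comp (T.tendsto_pow_rt hidem k)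
  have h2 : ∀ᶠ n in atTop, (x:ℝ) < ((T.pow (T.rt n) k : I) : ℝ) :=
    h.eventually_const_lt (show (x:ℝ) < ((1:I):ℝ) from hx)
  obtain ⟨n, hn⟩ := h2.exists
  exact ⟨n, hn⟩

lemma three_le_kk (hidem : ∀ x : I, T.mul x x = x → x = 0 ∨ x = 1)
    {x : I} {n : ℕ} (h2 : x < T.pow (T.rt n) 2)
    (hex : ∃ k, T.pow (T.rt n) k ≤ x) : 3 ≤ T.kk (T.rt n) x := by
  by_contra hcon
  push_neg at hcon
  have h3 : T.pow (T.rt n) 2 ≤ T.pow (T.rt n) (T.kk (T.rt n) x) :=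
    T.pow_anti _ (by omega)
  exact absurd ((h3.trans (T.kk_spec hex))) (not_le.2 h2)

lemma ff_pos (hidem : ∀ x : I, T.mul x x = x → x = 0 ∨ x = 1)
    {x : I} (hx : x < 1) (hex : ∀ m, ∃ k, T.pow (T.rt m) k ≤ x) : 0 < T.ff x := by
  obtain ⟨n, hn⟩ := T.exists_rt_pow_gt hidem hx 2
  have h3 : 3 ≤ T.kk (T.rt n) x := T.three_le_kk hidem hn (hex n)
  have h4 : (3:ℝ) / 2 ^ n ≤ T.fn n x := by
    rw [fn]
    gcongr
    exact_mod_cast h3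
  have h5 := T.fn_le_ff_add hex n
  have h6 : (0:ℝ) < 1 / 2 ^ n := by positivity
  have h7 : (3:ℝ) / 2 ^ n = 3 * (1 / 2 ^ n) := by ring
  linarith

lemma ff_rt_le (n : ℕ) : T.ff (T.rt n) ≤ 1 / 2 ^ n := by
  have h1 : T.kk (T.rt n) (T.rt n) ≤ 1 :=
    T.kk_min' ⟨1, by rw [T.pow_one']⟩ (by rw [T.pow_one'])
  refine (T.ff_le_fn n _).trans ?_
  rw [fn]
  gcongr
  exact_mod_cast h1

lemma coe_pos' {x : I} (hx : x ≠ 0) : (0:ℝ) < x :=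
  lt_of_le_of_ne x.2.1 fun h => hx (Subtype.ext h.symm)

lemma hexAll_strict (hidem : ∀ x : I, T.mul x x = x → x = 0 ∨ x = 1)
    {x : I} (hx : x ≠ 0) (m : ℕ) : ∃ k, T.pow (T.rt m) k ≤ x := by
  have h := (T.tendsto_pow_zero hidem (T.rt_lt_one m)).eventually_lt_const (coe_pos' hx)
  obtain ⟨k, hk⟩ := h.exists
  exact ⟨k, le_of_lt hk⟩

lemma mul_ne_zero' (hstrict : ∀ x : I, x ≠ 0 → ∀ n : ℕ, T.pow x n ≠ 0)
    {x y : I} (hx : x ≠ 0) (hy : y ≠ 0) : T.mul x y ≠ 0 := by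
  rcases le_total x y with h | h
  · have h2 : T.pow x 2 ≤ T.mul x y := by
      rw [T.pow_succ', T.pow_one']
      exact T.mono (le_refl x) h
    intro h0
    exact hstrict x hx 2 (le_antisymm (h0 ▸ h2) nonneg')
  · have h2 : T.pow y 2 ≤ T.mul x y := by
      rw [T.pow_succ', T.pow_one', T.comm x y]
      exact T.mono (le_refl y) h
    intro h0
    exact hstrict y hy 2 (le_antisymm (h0 ▸ h2) nonneg')

lemma ff_hom_strict (hidem : ∀ x : I, T.mul x x = x → x = 0 ∨ x = 1)
    (hstrict : ∀ x : I, x ≠ 0 → ∀ n : ℕ, T.pow x n ≠ 0)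
    {x y : I} (hx : x ≠ 0) (hy : y ≠ 0) :
    T.ff (T.mul x y) = T.ff x + T.ff y := by
  have hxy : T.mul x y ≠ 0 := T.mul_ne_zero' hstrict hx hy
  refine eq_of_abs_sub_le 5 fun n => ?_
  have hexx := T.hexAll_strict hidem hx
  have hexy := T.hexAll_strict hidem hy
  have hexxy := T.hexAll_strict hidem hxy
  have hub : T.kk (T.rt n) (T.mul x y) ≤ T.kk (T.rt n) x + T.kk (T.rt n) y :=
    T.kk_mul_le (hexx n) (hexy n) (hexxy n)
  have hlb : T.kk (T.rt n) x + T.kk (T.rt n) y ≤ T.kk (T.rt n) (T.mul x y) + 2 :=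
    T.kk_mul_ge hidem (T.rt_lt_one n) (hexx n) (hexy n) (hexxy n)
      (hstrict (T.rt n) (ne_of_gt (T.rt_pos n)) _)
  have hub' : T.fn n (T.mul x y) ≤ T.fn n x + T.fn n y := by
    have h2 : ((T.kk (T.rt n) (T.mul x y)) : ℝ) ≤
        (T.kk (T.rt n) x : ℝ) + (T.kk (T.rt n) y : ℝ) := by exact_mod_cast hub
    rw [fn, fn, fn, ← add_div]
    gcongr
  have hlb' : T.fn n x + T.fn n y ≤ T.fn n (T.mul x y) + 2 / 2 ^ n := by
    have h2 : (T.kk (T.rt n) x : ℝ) + (T.kk (T.rt n) y : ℝ) ≤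
        (T.kk (T.rt n) (T.mul x y) : ℝ) + 2 := by exact_mod_cast hlb
    rw [fn, fn, fn, ← add_div, ← add_div]
    gcongr
  have e1 := T.ff_le_fn n (T.mul x y)
  have e2 := T.fn_le_ff_add hexxy n
  have e3 := T.ff_le_fn n x
  have e4 := T.fn_le_ff_add hexx n
  have e5 := T.ff_le_fn n y
  have e6 := T.fn_le_ff_add hexy n
  have hh : (5:ℝ) / 2 ^ n = 1 / 2 ^ n + (2 / 2 ^ n + (1 / 2 ^ n + 1 / 2 ^ n)) := by ring
  rw [abs_le]
  constructor <;> [skip; skip] <;> rw [hh] <;> linarith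

lemma ff_strictAnti_strict (hidem : ∀ x : I, T.mul x x = x → x = 0 ∨ x = 1)
    (hstrict : ∀ x : I, x ≠ 0 → ∀ n : ℕ, T.pow x n ≠ 0)
    {x y : I} (hx : x ≠ 0) (hxy : x < y) : T.ff y < T.ff x := by
  obtain ⟨u, hu⟩ := T.exists_mul_eq hxy.le
  have hu0 : u ≠ 0 := fun h => hx (by rw [← hu, h, T.mul_zero'])
  have hu1 : u < 1 :=
    lt_of_le_of_ne le_one' fun h => absurd (by rw [← hu, h, T.mul_one'] : y = x)
      (ne_of_gt hxy)
  have hy0 : y ≠ 0 := fun h => absurd (h ▸ hxy) (by simp [← Subtype.coe_lt_coe])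
  have h1 : T.ff x = T.ff y + T.ff u := by
    rw [← hu]; exact T.ff_hom_strict hidem hstrict hy0 hu0
  have h2 : 0 < T.ff u := T.ff_pos hidem hu1 (T.hexAll_strict hidem hu0)
  linarith

lemma ff_continuousAt_strict (hidem : ∀ x : I, T.mul x x = x → x = 0 ∨ x = 1)
    (hstrict : ∀ x : I, x ≠ 0 → ∀ n : ℕ, T.pow x n ≠ 0)
    {x : I} (hx : x ≠ 0) : ContinuousAt T.ff x := by
  rw [Metric.continuousAt_iff]
  intro ε hε
  obtain ⟨n, hn⟩ := exists_pow_lt_of_lt_one hε (show (1:ℝ)/2 < 1 by norm_num)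
  have he : (1:ℝ) / 2 ^ n < ε := by rwa [← one_div_pow]
  have he0 : (0:ℝ) < 1 / 2 ^ n := by positivity
  set e : ℝ := 1 / 2 ^ n with hedef
  have hrt0 : T.rt n ≠ 0 := ne_of_gt (T.rt_pos n)
  have hfsn_le : T.ff (T.rt n) ≤ e := T.ff_rt_le n
  set lo : I := T.mul x (T.rt n) with hlodef
  have hlo0 : lo ≠ 0 := T.mul_ne_zero' hstrict hx hrt0
  have hlo_lt : lo < x := by
    refine lt_of_le_of_ne (T.mul_le_left _ _) fun h => ?_
    exact hx (T.eq_zero_of_mul_fixed hidem (T.rt_lt_one n) (by rw [T.comm]; exact h))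
  have hflo : T.ff lo = T.ff x + T.ff (T.rt n) :=
    T.ff_hom_strict hidem hstrict hx hrt0
  rcases le_or_gt (T.ff x) e with hA | hB
  · refine ⟨(x:ℝ) - (lo:ℝ), by simp [sub_pos]; exact hlo_lt, fun y hy => ?_⟩
    rw [Subtype.dist_eq, Real.dist_eq] at hy
    rw [Real.dist_eq, abs_lt]
    rcases le_total y x with hyx | hxy
    · have hylo : lo ≤ y := by
        have := abs_lt.1 hy
        have h2 : (lo:ℝ) < y := by linarith
        exact le_of_lt h2
      have hy0 : y ≠ 0 := fun h => by
        rw [h] at hylo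
        exact hlo0 (le_antisymm (by exact_mod_cast hylo) nonneg')
      have h3 : T.ff y ≤ T.ff lo := T.ff_antitone (T.hexAll_strict hidem hlo0) hylo
      have h4 : T.ff x ≤ T.ff y := T.ff_antitone (T.hexAll_strict hidem hy0) hyx
      constructor <;> linarith
    · have h4 : T.ff y ≤ T.ff x := T.ff_antitone (T.hexAll_strict hidem hx) hxy
      have h5 : 0 ≤ T.ff y := T.ff_nonneg y
      constructor <;> linarith
  · have hxrt : x ≤ T.rt n := by
      by_contra hcon
      push_neg at hcon
      have := T.ff_antitone (T.hexAll_strict hidem hrt0) hcon.le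
      linarith
    obtain ⟨z, hz⟩ := T.exists_mul_eq hxrt
    have hz0 : z ≠ 0 := fun h => hx (by rw [← hz, h, T.mul_zero'])
    have hfz : T.ff x = T.ff (T.rt n) + T.ff z := by
      rw [← hz]; exact T.ff_hom_strict hidem hstrict hrt0 hz0
    have hzx : x < z := by
      refine lt_of_le_of_ne ?_ fun h => ?_
      · by_contra hcon
        push_neg at hcon
        have h2 : T.mul (T.rt n) z ≤ T.mul x (T.rt n) := by
          rw [T.comm x]; exact T.mono (le_refl _) hcon.le
        rw [hz] at h2
        exact absurd (lt_of_le_of_lt h2 hlo_lt) (lt_irrefl x)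
      · rw [← h] at hz
        exact hx (T.eq_zero_of_mul_fixed hidem (T.rt_lt_one n) hz)
    refine ⟨min ((x:ℝ) - lo) ((z:ℝ) - x), by
      refine lt_min ?_ ?_ <;> simp [sub_pos]
      exacts [hlo_lt, hzx], fun y hy => ?_⟩
    rw [Subtype.dist_eq, Real.dist_eq] at hy
    rw [Real.dist_eq, abs_lt]
    have hy1 := (abs_lt.1 hy).1
    have hy2 := (abs_lt.1 hy).2
    have hm1 : min ((x:ℝ) - lo) ((z:ℝ) - x) ≤ (x:ℝ) - lo := min_le_left _ _
    have hm2 : min ((x:ℝ) - lo) ((z:ℝ) - x) ≤ (z:ℝ) - x := min_le_right _ _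
    rcases le_total y x with hyx | hxy
    · have hylo : lo ≤ y := le_of_lt (show (lo:ℝ) < y by linarith)
      have hy0 : y ≠ 0 := fun h => by
        rw [h] at hylo
        exact hlo0 (le_antisymm (by exact_mod_cast hylo) nonneg')
      have h3 : T.ff y ≤ T.ff lo := T.ff_antitone (T.hexAll_strict hidem hlo0) hylo
      have h4 : T.ff x ≤ T.ff y := T.ff_antitone (T.hexAll_strict hidem hy0) hyx
      have h6 : 0 < T.ff (T.rt n) :=
        T.ff_pos hidem (T.rt_lt_one n) (T.hexAll_strict hidem hrt0)
      constructor <;> linarith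
    · have hyz : y ≤ z := le_of_lt (show (y:ℝ) < z by linarith)
      have hy0 : y ≠ 0 := fun h => hx (by
        have : x ≤ y := hxy
        rw [h] at this
        exact le_antisymm (by exact_mod_cast this) nonneg')
      have h3 : T.ff z ≤ T.ff y := T.ff_antitone (T.hexAll_strict hidem hy0) hyz
      have h4 : T.ff y ≤ T.ff x := T.ff_antitone (T.hexAll_strict hidem hx) hxy
      constructor <;> linarith

lemma ff_pow_rt0 (hidem : ∀ x : I, T.mul x x = x → x = 0 ∨ x = 1)
    (hstrict : ∀ x : I, x ≠ 0 → ∀ n : ℕ, T.pow x n ≠ 0) (m : ℕ) :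
    T.ff (T.pow (T.rt 0) m) = m * T.ff (T.rt 0) := by
  induction m with
  | zero => rw [pow_zero', T.ff_one]; simp
  | succ m ih =>
      have hc0 : T.rt 0 ≠ 0 := ne_of_gt (T.rt_pos 0)
      have hp0 : T.pow (T.rt 0) m ≠ 0 := hstrict _ hc0 m
      rw [pow_succ', T.ff_hom_strict hidem hstrict hc0 hp0, ih]
      push_cast
      ring

lemma ff_surjOn_strict (hidem : ∀ x : I, T.mul x x = x → x = 0 ∨ x = 1)
    (hstrict : ∀ x : I, x ≠ 0 → ∀ n : ℕ, T.pow x n ≠ 0)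
    {t : ℝ} (ht : 0 ≤ t) : ∃ u : I, u ≠ 0 ∧ T.ff u = t := by
  have hffc : 0 < T.ff (T.rt 0) :=
    T.ff_pos hidem (T.rt_lt_one 0) (T.hexAll_strict hidem (ne_of_gt (T.rt_pos 0)))
  obtain ⟨m, hm⟩ := exists_nat_ge (t / T.ff (T.rt 0))
  have hmt : t ≤ m * T.ff (T.rt 0) := by
    rw [div_le_iff₀ hffc] at hm
    linarith
  set x₀ : I := T.pow (T.rt 0) m with hx₀
  have hx₀0 : x₀ ≠ 0 := hstrict _ (ne_of_gt (T.rt_pos 0)) m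
  have hcont : ContinuousOn T.ff (Set.Icc x₀ 1) := by
    intro z hz
    have hz0 : z ≠ 0 := fun h => hx₀0 (le_antisymm (h ▸ hz.1) nonneg')
    exact (T.ff_continuousAt_strict hidem hstrict hz0).continuousWithinAt
  obtain ⟨u, hu1, hu2, hu3⟩ := ivt_dec (g := T.ff) (a := x₀) (b := 1) (t := t)
    le_one' hcont
    (by rw [T.ff_one]; exact ht)
    (by rw [hx₀, T.ff_pow_rt0 hidem hstrict]; exact hmt)
  refine ⟨u, fun h => hx₀0 (le_antisymm (h ▸ hu1) nonneg'), hu3⟩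

/-- The strict case: `⊗` is isomorphic to multiplication. -/
lemma strict_case (hidem : ∀ x : I, T.mul x x = x → x = 0 ∨ x = 1)
    (hstrict : ∀ x : I, x ≠ 0 → ∀ n : ℕ, T.pow x n ≠ 0) :
    ∃ φ : I → I, StrictMono φ ∧ Function.Bijective φ ∧
      ∀ x y : I, (φ (T.mul x y) : ℝ) = (φ x : ℝ) * (φ y : ℝ) := by
  classical
  set φ : I → I := fun x => if x = 0 then 0 else
    ⟨Real.exp (-(T.ff x)), le_of_lt (Real.exp_pos _),
      by rw [← Real.exp_zero]; exact Real.exp_le_exp.2 (by simpa using T.ff_nonneg x)⟩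
    with hφ
  have hφ0 : φ 0 = 0 := by simp [hφ]
  have hφne : ∀ x : I, x ≠ 0 → (φ x : ℝ) = Real.exp (-(T.ff x)) := fun x hx => by
    simp [hφ, hx]
  have hmono : StrictMono φ := by
    intro x y hxy
    have hy0 : y ≠ 0 := fun h => by
      rw [h] at hxy
      exact absurd (lt_of_le_of_lt nonneg' hxy) (lt_irrefl _)
    by_cases hx0 : x = 0
    · rw [← Subtype.coe_lt_coe, hx0, hφ0, hφne y hy0]
      exact Real.exp_pos _
    · rw [← Subtype.coe_lt_coe, hφne x hx0, hφne y hy0]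
      exact Real.exp_lt_exp.2 (by
        have := T.ff_strictAnti_strict hidem hstrict hx0 hxy
        linarith)
  refine ⟨φ, hmono, ⟨hmono.injective, ?_⟩, ?_⟩
  · intro v
    by_cases hv : v = 0
    · exact ⟨0, by rw [hφ0, hv]⟩
    · have hv0 : (0:ℝ) < v := coe_pos' hv
      have hlog : 0 ≤ -Real.log v := by
        have := Real.log_nonpos (le_of_lt hv0) v.2.2
        linarith
      obtain ⟨u, hu0, hut⟩ := T.ff_surjOn_strict hidem hstrict hlog
      refine ⟨u, Subtype.ext ?_⟩
      rw [hφne u hu0, hut, neg_neg, Real.exp_log hv0]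
  · intro x y
    by_cases hx0 : x = 0
    · rw [hx0, T.zero_mul', hφ0]
      simp
    by_cases hy0 : y = 0
    · rw [hy0, T.mul_zero', hφ0]
      simp
    have hxy0 : T.mul x y ≠ 0 := T.mul_ne_zero' hstrict hx0 hy0
    rw [hφne _ hxy0, hφne _ hx0, hφne _ hy0,
      T.ff_hom_strict hidem hstrict hx0 hy0, neg_add, Real.exp_add]


lemma abs_min_sub_min' (a b c d : ℝ) : |min a b - min c d| ≤ |a - c| + |b - d| := by
  have h1 := le_abs_self (a - c)
  have h2 := neg_abs_le (a - c)
  have h3 := le_abs_self (b - d)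
  have h4 := neg_abs_le (b - d)
  rw [abs_le]
  simp only [min_def]
  split_ifs <;> constructor <;> linarith

lemma pow_mul' (x : I) (m k : ℕ) : T.pow x (m * k) = T.pow (T.pow x m) k := by
  induction k with
  | zero => simp
  | succ k ih =>
      rw [show m * (k + 1) = m + m * k from by ring, T.pow_add', ih, ← T.pow_succ']

lemma nilpotent_all (hidem : ∀ x : I, T.mul x x = x → x = 0 ∨ x = 1)
    (hwit : ∃ x : I, x ≠ 0 ∧ ∃ n : ℕ, T.pow x n = 0) :
    ∀ x : I, 0 < x → x < 1 → ∃ n : ℕ, T.pow x n = 0 := by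
  obtain ⟨x₀, hx₀0, N, hN⟩ := hwit
  intro x hx0 hx1
  have h := (T.tendsto_pow_zero hidem hx1).eventually_lt_const (coe_pos' hx₀0)
  obtain ⟨n, hn⟩ := h.exists
  refine ⟨n * N, ?_⟩
  have h2 : T.pow (T.pow x n) N ≤ T.pow x₀ N := T.pow_mono_base (le_of_lt hn) N
  rw [hN] at h2
  rw [T.pow_mul']
  exact le_antisymm h2 nonneg'

lemma hexAll_nil (hidem : ∀ x : I, T.mul x x = x → x = 0 ∨ x = 1)
    (hwit : ∃ x : I, x ≠ 0 ∧ ∃ n : ℕ, T.pow x n = 0) (x : I) (m : ℕ) :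
    ∃ k, T.pow (T.rt m) k ≤ x := by
  obtain ⟨N, hN⟩ := T.nilpotent_all hidem hwit (T.rt m) (T.rt_pos m) (T.rt_lt_one m)
  exact ⟨N, by rw [hN]; exact nonneg'⟩

lemma ffL_pos (hidem : ∀ x : I, T.mul x x = x → x = 0 ∨ x = 1)
    (hwit : ∃ x : I, x ≠ 0 ∧ ∃ n : ℕ, T.pow x n = 0) : 0 < T.ff 0 :=
  T.ff_pos hidem (show ((0:I):ℝ) < ((1:I):ℝ) by norm_num) (T.hexAll_nil hidem hwit 0)

lemma ff_le_L (hidem : ∀ x : I, T.mul x x = x → x = 0 ∨ x = 1)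
    (hwit : ∃ x : I, x ≠ 0 ∧ ∃ n : ℕ, T.pow x n = 0) (x : I) : T.ff x ≤ T.ff 0 :=
  T.ff_antitone (T.hexAll_nil hidem hwit 0) nonneg'

lemma ff_hom_nil (hidem : ∀ x : I, T.mul x x = x → x = 0 ∨ x = 1)
    (hwit : ∃ x : I, x ≠ 0 ∧ ∃ n : ℕ, T.pow x n = 0) (x y : I) :
    T.ff (T.mul x y) = min (T.ff 0) (T.ff x + T.ff y) := by
  have hex := T.hexAll_nil hidem hwit
  refine eq_of_abs_sub_le 6 fun n => ?_
  set m := T.kk (T.rt n) (T.mul x y) with hm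
  set kx := T.kk (T.rt n) x with hkx
  set ky := T.kk (T.rt n) y with hky
  set k0 := T.kk (T.rt n) 0 with hk0
  have hub1 : m ≤ kx + ky := T.kk_mul_le (hex x n) (hex y n) (hex _ n)
  have hub2 : m ≤ k0 := T.kk_antitone (hex 0 n) nonneg'
  have hlb : min k0 (kx + ky) ≤ m + 2 := by
    by_cases hz : T.pow (T.rt n) m = 0
    · have : k0 ≤ m := T.kk_min' (hex 0 n) (by rw [hz])
      exact le_trans (min_le_left _ _) (by omega)
    · have := T.kk_mul_ge hidem (T.rt_lt_one n) (hex x n) (hex y n) (hex _ n) hz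
      exact le_trans (min_le_right _ _) (by omega)
  have hmin : min (T.fn n 0) (T.fn n x + T.fn n y) = ((min k0 (kx + ky) : ℕ) : ℝ) / 2 ^ n := by
    rw [fn, fn, fn, ← add_div, ← Nat.cast_add,
      min_div_div_right (by positivity : (0:ℝ) ≤ 2 ^ n), ← Nat.cast_min]
  have hfneq : T.fn n (T.mul x y) = (m : ℝ) / 2 ^ n := by rw [fn, ← hm]
  have hfn : |T.fn n (T.mul x y) - min (T.fn n 0) (T.fn n x + T.fn n y)| ≤ 2 / 2 ^ n := by
    have c1 : (m : ℝ) ≤ ((min k0 (kx + ky) : ℕ) : ℝ) := by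
      exact_mod_cast le_min hub2 hub1
    have c2 : ((min k0 (kx + ky) : ℕ) : ℝ) ≤ (m : ℝ) + 2 := by exact_mod_cast hlb
    have key1 : (m : ℝ) / 2 ^ n ≤ ((min k0 (kx + ky) : ℕ) : ℝ) / 2 ^ n := by gcongr
    have key2 : ((min k0 (kx + ky) : ℕ) : ℝ) / 2 ^ n ≤ ((m : ℝ) + 2) / 2 ^ n := by gcongr
    have hsplit : ((m : ℝ) + 2) / 2 ^ n = (m : ℝ) / 2 ^ n + 2 / 2 ^ n := by ring
    rw [hmin, hfneq, abs_le]
    constructor <;> linarith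
  have e1 := T.ff_le_fn n (T.mul x y)
  have e2 := T.fn_le_ff_add (hex (T.mul x y)) n
  have e3 := T.ff_le_fn n x
  have e4 := T.fn_le_ff_add (hex x) n
  have e5 := T.ff_le_fn n y
  have e6 := T.fn_le_ff_add (hex y) n
  have e7 := T.ff_le_fn n 0
  have e8 := T.fn_le_ff_add (hex 0) n
  have hminlip : |min (T.fn n 0) (T.fn n x + T.fn n y) - min (T.ff 0) (T.ff x + T.ff y)| ≤
      |T.fn n 0 - T.ff 0| + |T.fn n x + T.fn n y - (T.ff x + T.ff y)| :=
    abs_min_sub_min' _ _ _ _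
  have b1 : |T.fn n 0 - T.ff 0| ≤ 1 / 2 ^ n := by rw [abs_le]; constructor <;> linarith
  have b2 : |T.fn n x + T.fn n y - (T.ff x + T.ff y)| ≤ 2 / 2 ^ n := by
    rw [abs_le]
    have hh : (2:ℝ) / 2 ^ n = 1 / 2 ^ n + 1 / 2 ^ n := by ring
    constructor <;> rw [hh] <;> linarith
  have htri : |T.ff (T.mul x y) - min (T.ff 0) (T.ff x + T.ff y)| ≤
      |T.ff (T.mul x y) - T.fn n (T.mul x y)| + (|T.fn n (T.mul x y) -
        min (T.fn n 0) (T.fn n x + T.fn n y)| +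
        |min (T.fn n 0) (T.fn n x + T.fn n y) - min (T.ff 0) (T.ff x + T.ff y)|) := by
    have := abs_sub_le (T.ff (T.mul x y)) (T.fn n (T.mul x y))
      (min (T.ff 0) (T.ff x + T.ff y))
    have h2 := abs_sub_le (T.fn n (T.mul x y)) (min (T.fn n 0) (T.fn n x + T.fn n y))
      (min (T.ff 0) (T.ff x + T.ff y))
    linarith
  have b0 : |T.ff (T.mul x y) - T.fn n (T.mul x y)| ≤ 1 / 2 ^ n := by
    rw [abs_le]; constructor <;> linarith
  have hh : (6:ℝ) / 2 ^ n = 1 / 2 ^ n + (2 / 2 ^ n + (1 / 2 ^ n + 2 / 2 ^ n)) := by ring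
  rw [hh]
  linarith


lemma ff_lt_L (hidem : ∀ x : I, T.mul x x = x → x = 0 ∨ x = 1)
    (hwit : ∃ x : I, x ≠ 0 ∧ ∃ n : ℕ, T.pow x n = 0)
    {x : I} (hx0 : x ≠ 0) : T.ff x < T.ff 0 := by
  by_cases hx1 : x = 1
  · rw [hx1, T.ff_one]
    exact T.ffL_pos hidem hwit
  have hex := T.hexAll_nil hidem hwit
  -- find n with (rt n)³ ⊗ x ≠ 0
  have ht : Tendsto (fun n => T.mul (T.pow (T.rt n) 3) x) atTop (nhds (T.mul 1 x)) :=
    (T.continuous.tendsto (1, x)).comp ((T.tendsto_pow_rt hidem 3).prodMk_nhds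
      tendsto_const_nhds)
  rw [T.one_mul'] at ht
  have ht2 : Tendsto (fun n => ((T.mul (T.pow (T.rt n) 3) x : I) : ℝ)) atTop (nhds (x:ℝ)) :=
    (continuous_subtype_val.tendsto x).comp ht
  obtain ⟨n, hn⟩ := (ht2.eventually_const_lt (coe_pos' hx0)).exists
  have hp3 : T.mul (T.pow (T.rt n) 3) x ≠ 0 := by
    intro h
    rw [h] at hn
    exact absurd hn (lt_irrefl _)
  have hkx1 : 1 ≤ T.kk (T.rt n) x := by
    by_contra hcon
    push_neg at hcon
    have := T.kk_spec (hex x n)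
    rw [Nat.lt_one_iff.1 hcon, pow_zero'] at this
    exact hx1 (le_antisymm this le_one').symm
  have hxle : x ≤ T.pow (T.rt n) (T.kk (T.rt n) x - 1) :=
    (T.lt_of_lt_kk (hex x n) (by omega)).le
  have h5 : T.pow (T.rt n) (T.kk (T.rt n) x + 2) ≠ 0 := by
    have hle : T.mul (T.pow (T.rt n) 3) x ≤ T.pow (T.rt n) (T.kk (T.rt n) x + 2) := by
      have h7 : T.mul (T.pow (T.rt n) 3) x ≤
          T.mul (T.pow (T.rt n) 3) (T.pow (T.rt n) (T.kk (T.rt n) x - 1)) :=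
        T.mono (le_refl _) hxle
      rwa [← T.pow_add', show 3 + (T.kk (T.rt n) x - 1) = T.kk (T.rt n) x + 2 from
        by omega] at h7
    exact fun h => hp3 (le_antisymm (h ▸ hle) nonneg')
  have h6 : T.kk (T.rt n) x + 3 ≤ T.kk (T.rt n) 0 := by
    by_contra hcon
    push_neg at hcon
    have h7 : T.pow (T.rt n) (T.kk (T.rt n) x + 2) ≤ T.pow (T.rt n) (T.kk (T.rt n) 0) :=
      T.pow_anti _ (by omega)
    have h8 := h7.trans (T.kk_spec (hex 0 n))
    exact h5 (le_antisymm h8 nonneg')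
  have hc0 : (T.kk (T.rt n) x : ℝ) + 3 ≤ (T.kk (T.rt n) 0 : ℝ) := by exact_mod_cast h6
  have hc1 : ((T.kk (T.rt n) x : ℝ) + 3) / 2 ^ n ≤ (T.kk (T.rt n) 0 : ℝ) / 2 ^ n := by gcongr
  have hq1 : T.ff x ≤ T.fn n x := T.ff_le_fn n x
  have hq2 : T.fn n 0 ≤ T.ff 0 + 1 / 2 ^ n := T.fn_le_ff_add (hex 0) n
  have hfnx : T.fn n x = (T.kk (T.rt n) x : ℝ) / 2 ^ n := by rw [fn]
  have hfn0 : T.fn n 0 = (T.kk (T.rt n) 0 : ℝ) / 2 ^ n := by rw [fn]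
  have hsplit : ((T.kk (T.rt n) x : ℝ) + 3) / 2 ^ n =
      (T.kk (T.rt n) x : ℝ) / 2 ^ n + 3 * (1 / 2 ^ n) := by ring
  have he0 : (0:ℝ) < 1 / 2 ^ n := by positivity
  linarith

lemma ff_strictAnti_nil (hidem : ∀ x : I, T.mul x x = x → x = 0 ∨ x = 1)
    (hwit : ∃ x : I, x ≠ 0 ∧ ∃ n : ℕ, T.pow x n = 0)
    {x y : I} (hxy : x < y) : T.ff y < T.ff x := by
  have hy0 : y ≠ 0 := fun h => absurd (h ▸ hxy) (by simp [← Subtype.coe_lt_coe])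
  obtain ⟨u, hu⟩ := T.exists_mul_eq hxy.le
  have hu1 : u < 1 :=
    lt_of_le_of_ne le_one' fun h => absurd (by rw [← hu, h, T.mul_one'] : y = x)
      (ne_of_gt hxy)
  have hhom : T.ff x = min (T.ff 0) (T.ff y + T.ff u) := by
    rw [← hu]; exact T.ff_hom_nil hidem hwit y u
  have hffu : 0 < T.ff u := T.ff_pos hidem hu1 (T.hexAll_nil hidem hwit u)
  have hffy : T.ff y < T.ff 0 := T.ff_lt_L hidem hwit hy0
  rcases le_total (T.ff 0) (T.ff y + T.ff u) with h | h
  · rw [min_eq_left h] at hhom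
    linarith
  · rw [min_eq_right h] at hhom
    linarith

lemma ff_continuousAt_nil (hidem : ∀ x : I, T.mul x x = x → x = 0 ∨ x = 1)
    (hwit : ∃ x : I, x ≠ 0 ∧ ∃ n : ℕ, T.pow x n = 0) (x : I) :
    ContinuousAt T.ff x := by
  have hex := T.hexAll_nil hidem hwit
  rw [Metric.continuousAt_iff]
  intro ε hε
  obtain ⟨n, hn⟩ := exists_pow_lt_of_lt_one hε (show (1:ℝ)/2 < 1 by norm_num)
  have he : (1:ℝ) / 2 ^ n < ε := by rwa [← one_div_pow]
  have he0 : (0:ℝ) < 1 / 2 ^ n := by positivity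
  by_cases hx : x = 0
  · subst hx
    have hk01 : 1 ≤ T.kk (T.rt n) 0 := by
      by_contra hcon
      push_neg at hcon
      have := T.kk_spec (hex 0 n)
      rw [Nat.lt_one_iff.1 hcon, pow_zero'] at this
      have : ((1:I):ℝ) ≤ ((0:I):ℝ) := this
      norm_num at this
    have hw : (0:I) < T.pow (T.rt n) (T.kk (T.rt n) 0 - 1) :=
      T.lt_of_lt_kk (hex 0 n) (by omega)
    refine ⟨(T.pow (T.rt n) (T.kk (T.rt n) 0 - 1) : ℝ), coe_pos' (ne_of_gt hw), fun y hy => ?_⟩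
    rw [Subtype.dist_eq, Real.dist_eq] at hy
    have hy' : (y:ℝ) < (T.pow (T.rt n) (T.kk (T.rt n) 0 - 1) : ℝ) := by
      have : |(y:ℝ) - ((0:I):ℝ)| = (y:ℝ) := by
        simp [abs_of_nonneg y.2.1]
      rwa [this] at hy
    have hylt : y < T.pow (T.rt n) (T.kk (T.rt n) 0 - 1) := hy'
    have hky : T.kk (T.rt n) y = T.kk (T.rt n) 0 := by
      refine le_antisymm (T.kk_antitone (hex 0 n) nonneg') ?_
      by_contra hcon
      push_neg at hcon
      have h7 : T.pow (T.rt n) (T.kk (T.rt n) 0 - 1) ≤ T.pow (T.rt n) (T.kk (T.rt n) y) :=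
        T.pow_anti _ (by omega)
      exact absurd (h7.trans (T.kk_spec (hex y n))) (not_le.2 hylt)
    have hfny : T.fn n y = T.fn n 0 := by rw [fn, fn, hky]
    have hq1 : T.ff y ≤ T.ff 0 := T.ff_antitone (hex 0) nonneg'
    have hq2 : T.fn n y ≤ T.ff y + 1 / 2 ^ n := T.fn_le_ff_add (hex y) n
    have hq3 : T.ff 0 ≤ T.fn n 0 := T.ff_le_fn n 0
    rw [Real.dist_eq, abs_lt]
    constructor <;> linarith
  · have hrt0 : T.rt n ≠ 0 := ne_of_gt (T.rt_pos n)
    have hfsn_le : T.ff (T.rt n) ≤ 1 / 2 ^ n := T.ff_rt_le n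
    set lo : I := T.mul x (T.rt n) with hlodef
    have hlo_lt : lo < x := by
      refine lt_of_le_of_ne (T.mul_le_left _ _) fun h => ?_
      exact hx (T.eq_zero_of_mul_fixed hidem (T.rt_lt_one n) (by rw [T.comm]; exact h))
    have hflo : T.ff lo ≤ T.ff x + T.ff (T.rt n) := by
      rw [hlodef, T.ff_hom_nil hidem hwit x (T.rt n)]
      exact min_le_right _ _
    rcases le_or_gt (T.ff x) (1 / 2 ^ n) with hA | hB
    · refine ⟨(x:ℝ) - (lo:ℝ), by simp [sub_pos]; exact hlo_lt, fun y hy => ?_⟩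
      rw [Subtype.dist_eq, Real.dist_eq] at hy
      rw [Real.dist_eq, abs_lt]
      rcases le_total y x with hyx | hxy
      · have hylo : lo ≤ y := by
          have := abs_lt.1 hy
          have h2 : (lo:ℝ) < y := by linarith
          exact le_of_lt h2
        have h3 : T.ff y ≤ T.ff lo := T.ff_antitone (hex lo) hylo
        have h4 : T.ff x ≤ T.ff y := T.ff_antitone (hex y) hyx
        constructor <;> linarith
      · have h4 : T.ff y ≤ T.ff x := T.ff_antitone (hex x) hxy
        have h5 : 0 ≤ T.ff y := T.ff_nonneg y
        constructor <;> linarith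
    · have hxrt : x ≤ T.rt n := by
        by_contra hcon
        push_neg at hcon
        have := T.ff_antitone (hex (T.rt n)) hcon.le
        linarith
      obtain ⟨z, hz⟩ := T.exists_mul_eq hxrt
      have hfz : T.ff x - T.ff (T.rt n) ≤ T.ff z := by
        have : T.ff x ≤ T.ff (T.rt n) + T.ff z := by
          rw [← hz, T.ff_hom_nil hidem hwit (T.rt n) z]
          exact min_le_right _ _
        linarith
      have hzx : x < z := by
        refine lt_of_le_of_ne ?_ fun h => ?_
        · by_contra hcon
          push_neg at hcon
          have h2 : T.mul (T.rt n) z ≤ T.mul x (T.rt n) := by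
            rw [T.comm x]; exact T.mono (le_refl _) hcon.le
          rw [hz] at h2
          exact absurd (lt_of_le_of_lt h2 hlo_lt) (lt_irrefl x)
        · rw [← h] at hz
          exact hx (T.eq_zero_of_mul_fixed hidem (T.rt_lt_one n) hz)
      refine ⟨min ((x:ℝ) - lo) ((z:ℝ) - x), by
        refine lt_min ?_ ?_ <;> simp [sub_pos]
        exacts [hlo_lt, hzx], fun y hy => ?_⟩
      rw [Subtype.dist_eq, Real.dist_eq] at hy
      rw [Real.dist_eq, abs_lt]
      have hy1 := (abs_lt.1 hy).1
      have hy2 := (abs_lt.1 hy).2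
      have hm1 : min ((x:ℝ) - lo) ((z:ℝ) - x) ≤ (x:ℝ) - lo := min_le_left _ _
      have hm2 : min ((x:ℝ) - lo) ((z:ℝ) - x) ≤ (z:ℝ) - x := min_le_right _ _
      rcases le_total y x with hyx | hxy
      · have hylo : lo ≤ y := le_of_lt (show (lo:ℝ) < y by linarith)
        have h3 : T.ff y ≤ T.ff lo := T.ff_antitone (hex lo) hylo
        have h4 : T.ff x ≤ T.ff y := T.ff_antitone (hex y) hyx
        have h6 : 0 < T.ff (T.rt n) :=
          T.ff_pos hidem (T.rt_lt_one n) (hex (T.rt n))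
        constructor <;> linarith
      · have hyz : y ≤ z := le_of_lt (show (y:ℝ) < z by linarith)
        have h3 : T.ff z ≤ T.ff y := T.ff_antitone (hex y) hyz
        have h4 : T.ff y ≤ T.ff x := T.ff_antitone (hex x) hxy
        constructor <;> linarith


/-- The nilpotent case: `⊗` is isomorphic to the Łukasiewicz tensor. -/
lemma nilpotent_case (hidem : ∀ x : I, T.mul x x = x → x = 0 ∨ x = 1)
    (hwit : ∃ x : I, x ≠ 0 ∧ ∃ n : ℕ, T.pow x n = 0) :
    ∃ φ : I → I, StrictMono φ ∧ Function.Bijective φ ∧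
      ∀ x y : I, (φ (T.mul x y) : ℝ) = max 0 ((φ x : ℝ) + (φ y : ℝ) - 1) := by
  have hL : 0 < T.ff 0 := T.ffL_pos hidem hwit
  have hLne : T.ff 0 ≠ 0 := ne_of_gt hL
  set φ : I → I := fun x => ⟨1 - T.ff x / T.ff 0, by
      constructor
      · have h1 : T.ff x ≤ T.ff 0 := T.ff_le_L hidem hwit x
        have h2 : T.ff x / T.ff 0 ≤ 1 := (div_le_one hL).2 h1
        linarith
      · have h1 : 0 ≤ T.ff x / T.ff 0 := div_nonneg (T.ff_nonneg x) hL.le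
        linarith⟩ with hφ
  have hcoe : ∀ x : I, (φ x : ℝ) = 1 - T.ff x / T.ff 0 := fun x => rfl
  have hmono : StrictMono φ := by
    intro x y hxy
    rw [← Subtype.coe_lt_coe, hcoe, hcoe]
    have h1 : T.ff y < T.ff x := T.ff_strictAnti_nil hidem hwit hxy
    have h2 : T.ff y / T.ff 0 < T.ff x / T.ff 0 := by gcongr
    linarith
  refine ⟨φ, hmono, ⟨hmono.injective, ?_⟩, ?_⟩
  · intro v
    set t : ℝ := (1 - (v:ℝ)) * T.ff 0 with ht
    have ht0 : 0 ≤ t := mul_nonneg (by linarith [v.2.2]) hL.le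
    have htL : t ≤ T.ff 0 := by nlinarith [v.2.1]
    have hcont : ContinuousOn T.ff (Set.Icc 0 1) := fun z _ =>
      (T.ff_continuousAt_nil hidem hwit z).continuousWithinAt
    obtain ⟨u, hu1, hu2, hu3⟩ := ivt_dec (g := T.ff) (a := 0) (b := 1) (t := t)
      zero_le_one hcont (by rw [T.ff_one]; exact ht0) htL
    refine ⟨u, Subtype.ext ?_⟩
    rw [hcoe, hu3, ht]
    field_simp
    ring
  · intro x y
    rw [hcoe, hcoe, hcoe, T.ff_hom_nil hidem hwit x y]
    rcases le_total (T.ff 0) (T.ff x + T.ff y) with h | h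
    · rw [min_eq_left h, div_self hLne]
      have h1 : 1 ≤ (T.ff x + T.ff y) / T.ff 0 := (one_le_div hL).2 h
      have h2 : (T.ff x + T.ff y) / T.ff 0 = T.ff x / T.ff 0 + T.ff y / T.ff 0 := add_div _ _ _
      rw [max_eq_left (by linarith)]
      norm_num
    · rw [min_eq_right h]
      have h1 : (T.ff x + T.ff y) / T.ff 0 ≤ 1 := (div_le_one hL).2 h
      have h2 : (T.ff x + T.ff y) / T.ff 0 = T.ff x / T.ff 0 + T.ff y / T.ff 0 := add_div _ _ _
      rw [max_eq_right (by linarith)]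
      linarith

end ContinuousTNorm

/-- Classification of continuous t-norms whose only idempotents are `0` and `1`:
with no nilpotent elements, `⊗` is order-isomorphic to multiplication; with a nilpotent
element, every `x` with `0 < x < 1` is nilpotent and `⊗` is order-isomorphic to the
Łukasiewicz tensor. -/
theorem tnorm_classification_of_idempotents_eq_bot_top (T : ContinuousTNorm)
    (hidem : ∀ x : I, T.mul x x = x → x = 0 ∨ x = 1) :
    ((∀ x : I, x ≠ 0 → ∀ n : ℕ, T.pow x n ≠ 0) →
      ∃ φ : I → I, StrictMono φ ∧ Function.Bijective φ ∧
        ∀ x y : I, (φ (T.mul x y) : ℝ) = (φ x : ℝ) * (φ y : ℝ)) ∧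
    ((∃ x : I, x ≠ 0 ∧ ∃ n : ℕ, T.pow x n = 0) →
      (∀ x : I, 0 < x → x < 1 → ∃ n : ℕ, T.pow x n = 0) ∧
      ∃ φ : I → I, StrictMono φ ∧ Function.Bijective φ ∧
        ∀ x y : I, (φ (T.mul x y) : ℝ) = max 0 ((φ x : ℝ) + (φ y : ℝ) - 1)) := by
  exact ⟨fun h => T.strict_case hidem h,
    fun hwit => ⟨T.nilpotent_all hidem hwit, T.nilpotent_case hidem hwit⟩⟩
end

section
/- Let (⊗ᵢ)_{i∈I} be a family of continuous t-norms on [0,1], and let (aᵢ)_{i∈I}, (bᵢ)_{i∈I} be families of elements of [0,1] with aᵢ < bᵢ for all i such that the open intervals (aᵢ,bᵢ) are pairwise disjoint. Define x⊗y = aᵢ + (bᵢ−aᵢ)·( ((x−aᵢ)/(bᵢ−aᵢ)) ⊗ᵢ ((y−aᵢ)/(bᵢ−aᵢ)) ) if x, y ∈ [aᵢ,bᵢ] for some i ∈ I, and x⊗y = min(x,y) otherwise. Then ⊗ is a well-defined continuous t-norm on [0,1], and its residuation is given by hom(x,y) = 1 if x ≤ y; hom(x,y) = aᵢ + (bᵢ−aᵢ)·homᵢ((x−aᵢ)/(bᵢ−aᵢ),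 (y−aᵢ)/(bᵢ−aᵢ)) if x, y ∈ [aᵢ,bᵢ]; and hom(x,y) = y otherwise (where homᵢ is the residuation of ⊗ᵢ). -/
open unitInterval Set

instance : Fact ((0:ℝ) ≤ 1) := ⟨zero_le_one⟩

/-- The residuation `hom(u,v) = sup {w | u ⊗ w ≤ v}` of a t-norm. -/
noncomputable def ContinuousTNorm.hom (T : ContinuousTNorm) (u v : I) : I :=
  sSup {w : I | T.mul u w ≤ v}

/-- Clamping a real number into `[0,1]`. -/
noncomputable def clamp (r : ℝ) : I := Set.projIcc 0 1 zero_le_one r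

namespace OrdSum
open Filter Topology

lemma coe_min (x y : I) : ((min x y : I) : ℝ) = min (x:ℝ) (y:ℝ) := by
  rcases le_total x y with h | h
  · rw [min_eq_left h, min_eq_left (Subtype.coe_le_coe.2 h)]
  · rw [min_eq_right h, min_eq_right (Subtype.coe_le_coe.2 h)]

lemma tn_le_left (t : ContinuousTNorm) (x y : I) : t.mul x y ≤ x := by
  rw [t.comm]
  calc t.mul y x ≤ t.mul 1 x := t.mono le_one' le_rfl
  _ = x := t.one_mul' x

lemma tn_le_right (t : ContinuousTNorm) (x y : I) : t.mul x y ≤ y := by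
  calc t.mul x y ≤ t.mul 1 y := t.mono le_one' le_rfl
  _ = y := t.one_mul' y

lemma tn_zero (t : ContinuousTNorm) (x : I) : t.mul x 0 = 0 :=
  le_antisymm (tn_le_right t x 0) nonneg'

lemma tn_mul_one (t : ContinuousTNorm) (x : I) : t.mul x 1 = x :=
  (t.comm x 1).trans (t.one_mul' x)

lemma tn_sect_cont (t : ContinuousTNorm) (u : I) : Continuous fun w => t.mul u w :=
  t.continuous.comp (Continuous.prodMk_right u)

lemma tn_le_hom (t : ContinuousTNorm) {u v w : I} (h : t.mul u w ≤ v) : w ≤ t.hom u v :=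
  le_sSup h

lemma tn_mul_hom_le (t : ContinuousTNorm) (u v : I) : t.mul u (t.hom u v) ≤ v := by
  have hne : ({w : I | t.mul u w ≤ v}).Nonempty :=
    ⟨0, by simp only [Set.mem_setOf_eq, tn_zero]; exact nonneg'⟩
  have hcl : IsClosed {w : I | t.mul u w ≤ v} :=
    isClosed_Iic.preimage (tn_sect_cont t u)
  exact hcl.sSup_mem hne

lemma clamp_coe {r : ℝ} (h0 : 0 ≤ r) (h1 : r ≤ 1) : (clamp r : ℝ) = r := by
  simp [clamp, Set.projIcc_of_mem, Set.mem_Icc.2 ⟨h0, h1⟩]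

variable {ι : Type*}

noncomputable def phi (a b : ι → I) (i : ι) (x : I) : I :=
  clamp (((x:ℝ) - (a i : ℝ)) / ((b i : ℝ) - (a i : ℝ)))

variable {t : ι → ContinuousTNorm} {a b : ι → I} {T : I → I → I}

section basic
variable (hab : ∀ i, a i < b i)
include hab

lemma delta_pos (i : ι) : (0:ℝ) < (b i : ℝ) - (a i : ℝ) :=
  sub_pos.2 (Subtype.coe_lt_coe.2 (hab i))

lemma phi_coe {i : ι} {x : I} (hx : x ∈ Icc (a i) (b i)) :
    (phi a b i x : ℝ) = ((x:ℝ) - (a i : ℝ)) / ((b i : ℝ) - (a i : ℝ)) := by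
  have hd := delta_pos hab i
  refine clamp_coe (div_nonneg (by simpa using Subtype.coe_le_coe.2 hx.1) hd.le) ?_
  rw [div_le_one hd]
  have := Subtype.coe_le_coe.2 hx.2
  linarith

lemma psi_phi {i : ι} {x : I} (hx : x ∈ Icc (a i) (b i)) :
    (a i : ℝ) + ((b i : ℝ) - (a i : ℝ)) * (phi a b i x : ℝ) = x := by
  rw [phi_coe hab hx, mul_div_cancel₀ _ (delta_pos hab i).ne']
  ring

lemma phi_mono {i : ι} {x y : I} (hx : x ∈ Icc (a i) (b i)) (hy : y ∈ Icc (a i) (b i))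
    (hxy : x ≤ y) : phi a b i x ≤ phi a b i y := by
  rw [← Subtype.coe_le_coe, phi_coe hab hx, phi_coe hab hy]
  gcongr
  · exact (delta_pos hab i).le

omit hab in
lemma phi_a (i : ι) : phi a b i (a i) = 0 := by
  have : ((a i:ℝ) - (a i:ℝ)) / ((b i : ℝ) - (a i : ℝ)) = 0 := by ring
  exact Subtype.ext (by rw [phi, this] ; exact clamp_coe le_rfl zero_le_one)

lemma phi_b (i : ι) : phi a b i (b i) = 1 := by
  have : ((b i:ℝ) - (a i:ℝ)) / ((b i : ℝ) - (a i : ℝ)) = 1 :=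
    div_self (delta_pos hab i).ne'
  exact Subtype.ext (by rw [phi, this]; exact clamp_coe zero_le_one le_rfl)

end basic

section blk

variable (hab : ∀ i, a i < b i)
variable (hdisj : ∀ i j, i ≠ j → Set.Ioo (a i) (b i) ∩ Set.Ioo (a j) (b j) = ∅)
variable (hdef₁ : ∀ (i : ι) (x y : I), x ∈ Set.Icc (a i) (b i) → y ∈ Set.Icc (a i) (b i) →
      (T x y : ℝ) = (a i : ℝ) + ((b i : ℝ) - (a i : ℝ)) *
        ((t i).mul (clamp (((x : ℝ) - (a i : ℝ)) / ((b i : ℝ) - (a i : ℝ))))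
                   (clamp (((y : ℝ) - (a i : ℝ)) / ((b i : ℝ) - (a i : ℝ)))) : ℝ))
variable (hdef₂ : ∀ x y : I, (¬ ∃ i : ι, x ∈ Set.Icc (a i) (b i) ∧ y ∈ Set.Icc (a i) (b i)) →
      T x y = min x y)

include hdef₁ in
lemma Tblock {i : ι} {x y : I} (hx : x ∈ Icc (a i) (b i)) (hy : y ∈ Icc (a i) (b i)) :
    (T x y : ℝ) = (a i : ℝ) + ((b i : ℝ) - (a i : ℝ)) *
      ((t i).mul (phi a b i x) (phi a b i y) : ℝ) :=
  hdef₁ i x y hx hy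

include hab hdef₁ in
lemma T_mem_block {i : ι} {x y : I} (hx : x ∈ Icc (a i) (b i)) (hy : y ∈ Icc (a i) (b i)) :
    T x y ∈ Icc (a i) (b i) := by
  have hd := delta_pos hab i
  have h1 := Tblock (T := T) hdef₁ hx hy
  have hm : ((t i).mul (phi a b i x) (phi a b i y) : ℝ) ∈ Icc (0:ℝ) 1 :=
    ((t i).mul (phi a b i x) (phi a b i y)).2
  constructor
  · rw [← Subtype.coe_le_coe, h1]
    nlinarith [hm.1]
  · rw [← Subtype.coe_le_coe, h1]
    have := Subtype.coe_le_coe.2 (hab i).le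
    nlinarith [hm.2]

include hab hdef₁ in
lemma T_lower {i : ι} {x y : I} (hx : x ∈ Icc (a i) (b i)) (hy : y ∈ Icc (a i) (b i)) :
    a i ≤ T x y := (T_mem_block hab hdef₁ hx hy).1

include hab hdef₁ in
lemma phi_T {i : ι} {x y : I} (hx : x ∈ Icc (a i) (b i)) (hy : y ∈ Icc (a i) (b i)) :
    phi a b i (T x y) = (t i).mul (phi a b i x) (phi a b i y) := by
  have hd := delta_pos hab i
  apply Subtype.ext
  rw [phi_coe hab (T_mem_block hab hdef₁ hx hy), Tblock (T := T) hdef₁ hx hy]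
  field_simp
  ring

include hab hdef₁ in
lemma T_le_min_block {i : ι} {x y : I} (hx : x ∈ Icc (a i) (b i)) (hy : y ∈ Icc (a i) (b i)) :
    T x y ≤ min x y := by
  have hd := delta_pos hab i
  have h1 := Tblock (T := T) hdef₁ hx hy
  rw [le_min_iff]
  constructor
  · rw [← Subtype.coe_le_coe, h1]
    have h2 := psi_phi hab hx
    have := Subtype.coe_le_coe.2 (tn_le_left (t i) (phi a b i x) (phi a b i y))
    nlinarith
  · rw [← Subtype.coe_le_coe, h1]
    have h2 := psi_phi hab hy
    have := Subtype.coe_le_coe.2 (tn_le_right (t i) (phi a b i x) (phi a b i y))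
    nlinarith

include hab hdef₁ hdef₂ in
lemma T_le_min (x y : I) : T x y ≤ min x y := by
  by_cases h : ∃ i : ι, x ∈ Icc (a i) (b i) ∧ y ∈ Icc (a i) (b i)
  · obtain ⟨i, hx, hy⟩ := h
    exact T_le_min_block hab hdef₁ hx hy
  · exact (hdef₂ x y h).le

include hab hdef₁ in
lemma T_a {i : ι} {x : I} (hx : x ∈ Icc (a i) (b i)) : T (a i) x = a i := by
  have hd := delta_pos hab i
  have hai : a i ∈ Icc (a i) (b i) := ⟨le_rfl, (hab i).le⟩
  apply Subtype.ext
  rw [Tblock (T := T) hdef₁ hai hx, phi_a]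
  have h0 : (t i).mul 0 (phi a b i x) = 0 :=
    le_antisymm (tn_le_left (t i) _ _) nonneg'
  rw [h0]
  norm_num

include hab hdef₁ in
lemma T_b {i : ι} {x : I} (hx : x ∈ Icc (a i) (b i)) : T (b i) x = x := by
  have hbi : b i ∈ Icc (a i) (b i) := ⟨(hab i).le, le_rfl⟩
  apply Subtype.ext
  rw [Tblock (T := T) hdef₁ hbi hx, phi_b hab, (t i).one_mul', psi_phi hab hx]

include hab hdisj in
lemma two_blocks {i j : ι} (hij : i ≠ j) {u : I} (hi : u ∈ Icc (a i) (b i))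
    (hj : u ∈ Icc (a j) (b j)) : u = a j ∨ u = b j := by
  by_contra hcon
  push_neg at hcon
  have hj1 : a j < u := lt_of_le_of_ne hj.1 (Ne.symm hcon.1)
  have hj2 : u < b j := lt_of_le_of_ne hj.2 hcon.2
  have key : ∀ z : I, z ∈ Ioo (a i) (b i) → z ∈ Ioo (a j) (b j) → False := by
    intro z h1 h2
    have h3 := hdisj i j hij
    have : z ∈ (∅ : Set I) := h3 ▸ mem_inter h1 h2
    exact this
  rcases lt_or_eq_of_le hi.1 with h1 | h1
  · rcases lt_or_eq_of_le hi.2 with h2 | h2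
    · exact key u ⟨h1, h2⟩ ⟨hj1, hj2⟩
    · -- u = b i
      have hmax : max (a i) (a j) < u := max_lt h1 hj1
      obtain ⟨z, hz1, hz2⟩ := exists_between hmax
      exact key z ⟨lt_of_le_of_lt (le_max_left _ _) hz1, h2 ▸ hz2⟩
        ⟨lt_of_le_of_lt (le_max_right _ _) hz1, lt_trans hz2 hj2⟩
  · -- a i = u
    have hmin : u < min (b i) (b j) := lt_min (h1 ▸ hab i) hj2
    obtain ⟨z, hz1, hz2⟩ := exists_between hmin
    exact key z ⟨h1 ▸ hz1, lt_of_lt_of_le hz2 (min_le_left _ _)⟩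
      ⟨lt_trans hj1 hz1, lt_of_lt_of_le hz2 (min_le_right _ _)⟩

include hdef₁ hdef₂ in
lemma T_comm (x y : I) : T x y = T y x := by
  by_cases h : ∃ i : ι, x ∈ Icc (a i) (b i) ∧ y ∈ Icc (a i) (b i)
  · obtain ⟨i, hx, hy⟩ := h
    apply Subtype.ext
    rw [Tblock (T := T) hdef₁ hx hy, Tblock (T := T) hdef₁ hy hx, (t i).comm]
  · have h' : ¬ ∃ i : ι, y ∈ Icc (a i) (b i) ∧ x ∈ Icc (a i) (b i) := by
      rintro ⟨i, hy, hx⟩; exact h ⟨i, hx, hy⟩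
    rw [hdef₂ x y h, hdef₂ y x h', min_comm]

include hab hdef₁ hdef₂ in
lemma T_min {x y : I}
    (h : ∀ i, x ∈ Icc (a i) (b i) → y ∈ Icc (a i) (b i) →
      x = a i ∨ x = b i ∨ y = a i ∨ y = b i) :
    T x y = min x y := by
  by_cases hex : ∃ i : ι, x ∈ Icc (a i) (b i) ∧ y ∈ Icc (a i) (b i)
  · obtain ⟨i, hx, hy⟩ := hex
    rcases h i hx hy with h1 | h1 | h1 | h1
    · rw [h1, T_a hab hdef₁ hy]; exact (min_eq_left hy.1).symm
    · rw [h1, T_b hab hdef₁ hy]; exact (min_eq_right hy.2).symm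
    · rw [T_comm (t := t) hdef₁ hdef₂, h1, T_a hab hdef₁ hx]
      exact (min_eq_right hx.1).symm
    · rw [T_comm (t := t) hdef₁ hdef₂, h1, T_b hab hdef₁ hx]
      exact (min_eq_left hx.2).symm
  · exact hdef₂ x y hex

include hab hdisj hdef₁ hdef₂ in
lemma T_mono1 {x₁ x₂ : I} (y : I) (hx : x₁ ≤ x₂) : T x₁ y ≤ T x₂ y := by
  by_cases h1 : ∃ i : ι, x₁ ∈ Icc (a i) (b i) ∧ y ∈ Icc (a i) (b i)
  · obtain ⟨i, hx1, hy⟩ := h1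
    by_cases h2 : x₂ ∈ Icc (a i) (b i)
    · -- in-block monotone
      have hd := delta_pos hab i
      rw [← Subtype.coe_le_coe, Tblock (T := T) hdef₁ hx1 hy,
        Tblock (T := T) hdef₁ h2 hy]
      have := Subtype.coe_le_coe.2
        ((t i).mono (phi_mono hab hx1 h2 hx) (le_refl (phi a b i y)))
      nlinarith
    · -- x₂ > b i
      have hx2 : b i < x₂ := by
        by_contra hc
        exact h2 ⟨le_trans hx1.1 hx, not_lt.1 hc⟩
      have e2 : T x₂ y = min x₂ y := by
        apply T_min hab hdef₁ hdef₂
        intro j hx2j hyj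
        have hij : i ≠ j := fun he => h2 (he ▸ hx2j)
        rcases two_blocks hab hdisj hij hy hyj with h | h
        · exact Or.inr (Or.inr (Or.inl h))
        · exact Or.inr (Or.inr (Or.inr h))
      rw [e2, min_eq_right (le_trans hy.2 hx2.le)]
      exact le_trans (T_le_min_block hab hdef₁ hx1 hy) (min_le_right _ _)
  · by_cases h2 : ∃ j : ι, x₂ ∈ Icc (a j) (b j) ∧ y ∈ Icc (a j) (b j)
    · obtain ⟨j, hx2, hy⟩ := h2
      have hx1j : x₁ < a j := by
        by_contra hc
        exact h1 ⟨j, ⟨not_lt.1 hc, le_trans hx hx2.2⟩, hy⟩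
      calc T x₁ y ≤ min x₁ y := T_le_min hab hdef₁ hdef₂ x₁ y
      _ ≤ x₁ := min_le_left _ _
      _ ≤ a j := hx1j.le
      _ ≤ T x₂ y := T_lower hab hdef₁ hx2 hy
    · rw [hdef₂ x₁ y h1, hdef₂ x₂ y h2]
      exact min_le_min hx le_rfl

include hab hdisj hdef₁ hdef₂ in
lemma T_mono : ∀ ⦃x₁ x₂ y₁ y₂ : I⦄, x₁ ≤ x₂ → y₁ ≤ y₂ → T x₁ y₁ ≤ T x₂ y₂ := by
  intro x₁ x₂ y₁ y₂ hx hy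
  calc T x₁ y₁ ≤ T x₂ y₁ := T_mono1 hab hdisj hdef₁ hdef₂ y₁ hx
  _ = T y₁ x₂ := T_comm (t := t) hdef₁ hdef₂ _ _
  _ ≤ T y₂ x₂ := T_mono1 hab hdisj hdef₁ hdef₂ x₂ hy
  _ = T x₂ y₂ := T_comm (t := t) hdef₁ hdef₂ _ _

include hab hdef₁ hdef₂ in
lemma T_one (x : I) : T 1 x = x := by
  by_cases h : ∃ i : ι, (1:I) ∈ Icc (a i) (b i) ∧ x ∈ Icc (a i) (b i)
  · obtain ⟨i, h1, hx⟩ := h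
    have hb : b i = 1 := le_antisymm le_one' h1.2
    rw [← hb, T_b hab hdef₁ hx]
  · rw [hdef₂ 1 x h, min_eq_right le_one']

include hab hdisj hdef₁ hdef₂ in
lemma T_assoc (x y z : I) : T (T x y) z = T x (T y z) := by
  by_cases hA : ∃ i : ι, x ∈ Icc (a i) (b i) ∧ y ∈ Icc (a i) (b i) ∧ z ∈ Icc (a i) (b i)
  · obtain ⟨i, hx, hy, hz⟩ := hA
    have hxy := T_mem_block hab hdef₁ hx hy
    have hyz := T_mem_block hab hdef₁ hy hz
    apply Subtype.ext
    rw [Tblock (T := T) hdef₁ hxy hz, Tblock (T := T) hdef₁ hx hyz,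
      phi_T hab hdef₁ hx hy, phi_T hab hdef₁ hy hz, (t i).assoc]
  · by_cases hB : ∃ i : ι, x ∈ Icc (a i) (b i) ∧ y ∈ Icc (a i) (b i)
    · obtain ⟨i, hx, hy⟩ := hB
      have hz : z ∉ Icc (a i) (b i) := fun hz => hA ⟨i, hx, hy, hz⟩
      have hxy := T_mem_block hab hdef₁ hx hy
      rcases lt_or_ge z (a i) with hza | hza
      · -- z below the block : everything collapses to z
        have h1 : T y z = z := by
          rw [T_min hab hdef₁ hdef₂ (fun j hyj hzj => by
            have hij : i ≠ j := fun e => hz (e ▸ hzj)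
            rcases two_blocks hab hdisj hij hy hyj with h | h
            · exact Or.inl h
            · exact Or.inr (Or.inl h))]
          exact min_eq_right (le_trans hza.le hy.1)
        have h2 : T x z = z := by
          rw [T_min hab hdef₁ hdef₂ (fun j hxj hzj => by
            have hij : i ≠ j := fun e => hz (e ▸ hzj)
            rcases two_blocks hab hdisj hij hx hxj with h | h
            · exact Or.inl h
            · exact Or.inr (Or.inl h))]
          exact min_eq_right (le_trans hza.le hx.1)
        have h3 : T (T x y) z = z := by
          rw [T_min hab hdef₁ hdef₂ (fun j hwj hzj => by
            have hij : i ≠ j := fun e => hz (e ▸ hzj)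
            rcases two_blocks hab hdisj hij hxy hwj with h | h
            · exact Or.inl h
            · exact Or.inr (Or.inl h))]
          exact min_eq_right (le_trans hza.le hxy.1)
        rw [h3, h1, h2]
      · have hzb : b i < z := by
          by_contra hc
          exact hz ⟨hza, not_lt.1 hc⟩
        have h1 : T y z = y := by
          rw [T_min hab hdef₁ hdef₂ (fun j hyj hzj => by
            have hij : i ≠ j := fun e => hz (e ▸ hzj)
            rcases two_blocks hab hdisj hij hy hyj with h | h
            · exact Or.inl h
            · exact Or.inr (Or.inl h))]
          exact min_eq_left (le_trans hy.2 hzb.le)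
        have h3 : T (T x y) z = T x y := by
          rw [T_min hab hdef₁ hdef₂ (fun j hwj hzj => by
            have hij : i ≠ j := fun e => hz (e ▸ hzj)
            rcases two_blocks hab hdisj hij hxy hwj with h | h
            · exact Or.inl h
            · exact Or.inr (Or.inl h))]
          exact min_eq_left (le_trans hxy.2 hzb.le)
        rw [h3, h1]
    · have hxym : T x y = min x y := hdef₂ x y hB
      rcases le_total y x with hyx | hxy' 
      · rw [hxym, min_eq_right hyx]
        have hw : T y z ≤ y :=
          le_trans (T_le_min hab hdef₁ hdef₂ y z) (min_le_left _ _)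
        have h1 : T x (T y z) = min x (T y z) := by
          apply T_min hab hdef₁ hdef₂
          intro k hxk hwk
          exact absurd ⟨k, hxk, ⟨le_trans hwk.1 hw, le_trans hyx hxk.2⟩⟩ hB
        rw [h1]
        exact (min_eq_right (le_trans hw hyx)).symm
      · rw [hxym, min_eq_left hxy']
        by_cases hC : ∃ j : ι, y ∈ Icc (a j) (b j) ∧ z ∈ Icc (a j) (b j)
        · obtain ⟨j, hyj, hzj⟩ := hC
          have hxj : x ∉ Icc (a j) (b j) := fun hxj => hB ⟨j, hxj, hyj⟩
          have hxa : x < a j := by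
            by_contra hc
            exact hxj ⟨not_lt.1 hc, le_trans hxy' hyj.2⟩
          have hyz := T_mem_block hab hdef₁ hyj hzj
          have h1 : T x (T y z) = min x (T y z) := by
            apply T_min hab hdef₁ hdef₂
            intro k hxk hwk
            have hjk : j ≠ k := fun e => hxj (e ▸ hxk)
            rcases two_blocks hab hdisj hjk hyz hwk with h | h
            · exact Or.inr (Or.inr (Or.inl h))
            · exact Or.inr (Or.inr (Or.inr h))
          have h2 : T x z = min x z := by
            apply T_min hab hdef₁ hdef₂
            intro k hxk hzk
            have hjk : j ≠ k := fun e => hxj (e ▸ hxk)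
            rcases two_blocks hab hdisj hjk hzj hzk with h | h
            · exact Or.inr (Or.inr (Or.inl h))
            · exact Or.inr (Or.inr (Or.inr h))
          rw [h1, h2, min_eq_left (le_trans hxa.le hyz.1),
            min_eq_left (le_trans hxa.le hzj.1)]
        · have h1 : T y z = min y z := hdef₂ y z hC
          rcases le_total z y with hzy | hyz'
          · rw [h1, min_eq_right hzy]
          · rw [h1, min_eq_left hyz']
            have h3 : T x z = min x z := by
              apply T_min hab hdef₁ hdef₂
              intro k hxk hzk
              exact absurd ⟨k, hxk, ⟨le_trans hxk.1 hxy', le_trans hyz' hzk.2⟩⟩ hB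
            rw [h3, hxym, min_eq_left hxy', min_eq_left (le_trans hxy' hyz')]

include hab hdef₁ hdef₂ in
lemma sect_surj (x v : I) (hv : v ≤ x) : ∃ w, T x w = v := by
  by_cases hs : ∃ i : ι, x ∈ Icc (a i) (b i) ∧ a i ≤ v
  · obtain ⟨i, hx, hv1⟩ := hs
    have hd := delta_pos hab i
    have hvm : v ∈ Icc (a i) (b i) := ⟨hv1, le_trans hv hx.2⟩
    set g : I → I := fun u => (t i).mul (phi a b i x) u with hg
    have hg0 : g 0 = 0 := tn_zero _ _
    have hg1 : g 1 = phi a b i x := tn_mul_one _ _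
    have hsub : Icc (g 0) (g 1) ⊆ g '' (Icc 0 1) :=
      intermediate_value_Icc nonneg' ((tn_sect_cont (t i) _).continuousOn)
    have hmem : phi a b i v ∈ Icc (g 0) (g 1) := by
      rw [hg0, hg1]
      exact ⟨nonneg', phi_mono hab hvm hx hv⟩
    obtain ⟨u, _, hu⟩ := hsub hmem
    have hu1 : (u : ℝ) ≤ 1 := u.2.2
    have hu0 : (0 : ℝ) ≤ u := u.2.1
    have hai : (0:ℝ) ≤ a i := (a i).2.1
    have hbi : (b i : ℝ) ≤ 1 := (b i).2.2
    refine ⟨⟨(a i : ℝ) + ((b i : ℝ) - (a i : ℝ)) * u, by constructor <;> nlinarith⟩, ?_⟩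
    set w : I := ⟨(a i : ℝ) + ((b i : ℝ) - (a i : ℝ)) * u, by constructor <;> nlinarith⟩
    have hwm : w ∈ Icc (a i) (b i) := by
      constructor
      · rw [← Subtype.coe_le_coe]
        show (a i : ℝ) ≤ (a i : ℝ) + ((b i : ℝ) - (a i : ℝ)) * u
        nlinarith
      · rw [← Subtype.coe_le_coe]
        show (a i : ℝ) + ((b i : ℝ) - (a i : ℝ)) * u ≤ (b i : ℝ)
        nlinarith
    have hphiw : phi a b i w = u := by
      apply Subtype.ext
      rw [phi_coe hab hwm]
      show ((a i : ℝ) + ((b i : ℝ) - (a i : ℝ)) * u - a i) / ((b i : ℝ) - (a i : ℝ)) = u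
      field_simp
      ring
    have hu' : (t i).mul (phi a b i x) u = phi a b i v := hu
    apply Subtype.ext
    rw [Tblock (T := T) hdef₁ hx hwm, hphiw, hu', psi_phi hab hvm]
  · have : T x v = min x v := by
      apply T_min hab hdef₁ hdef₂
      intro j hxj hvj
      exact absurd ⟨j, hxj, hvj.1⟩ hs
    exact ⟨v, this.trans (min_eq_right hv)⟩

include hab hdisj hdef₁ hdef₂ in
lemma sect_mono (x : I) : Monotone fun w => T x w :=
  fun _ _ h => T_mono hab hdisj hdef₁ hdef₂ le_rfl h

include hab hdisj hdef₁ hdef₂ in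
lemma sect_cont (x : I) : Continuous fun w => T x w := by
  rw [continuous_iff_continuousAt]
  intro y₀
  set f : I → I := fun w => T x w with hf
  have hmono : Monotone f := sect_mono hab hdisj hdef₁ hdef₂ x
  have hle : ∀ w, f w ≤ x := fun w =>
    le_trans (T_le_min hab hdef₁ hdef₂ x w) (min_le_left _ _)
  apply continuousAt_iff_continuous_left_right.2
  constructor
  · apply continuousWithinAt_left_of_monotoneOn_of_exists_between
      (hmono.monotoneOn univ) univ_mem
    intro v hv
    obtain ⟨m, hm1, hm2⟩ := exists_between hv
    obtain ⟨w, hw⟩ := sect_surj hab hdef₁ hdef₂ x m (le_trans hm2.le (hle y₀))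
    refine ⟨w, mem_univ w, ?_⟩
    show T x w ∈ Ioo v (T x y₀)
    rw [hw]; exact ⟨hm1, hm2⟩
  · by_cases hfx : f y₀ = x
    · apply ContinuousWithinAt.congr (continuousWithinAt_const (b := x))
      · intro w hw
        exact le_antisymm (hle w) (hfx ▸ hmono hw)
      · exact hfx
    · have hlt : f y₀ < x := lt_of_le_of_ne (hle y₀) hfx
      apply continuousWithinAt_right_of_monotoneOn_of_exists_between
        (hmono.monotoneOn univ) univ_mem
      intro v hv
      have hlt2 : f y₀ < min v x := lt_min hv hlt
      obtain ⟨m, hm1, hm2⟩ := exists_between hlt2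
      obtain ⟨w, hw⟩ := sect_surj hab hdef₁ hdef₂ x m
        (le_trans hm2.le (min_le_right _ _))
      refine ⟨w, mem_univ w, ?_⟩
      show T x w ∈ Ioo (T x y₀) v
      rw [hw]; exact ⟨hm1, lt_of_lt_of_le hm2 (min_le_left _ _)⟩

include hab hdisj hdef₁ hdef₂ in
lemma sect_cont' (y : I) : Continuous fun w => T w y := by
  have : (fun w => T w y) = fun w => T y w :=
    funext fun w => T_comm (t := t) hdef₁ hdef₂ w y
  rw [this]
  exact sect_cont hab hdisj hdef₁ hdef₂ y

include hab hdisj hdef₁ hdef₂ in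
lemma young_hi {x₀ : I} (y₀ u : I) (hu : T x₀ y₀ < u) :
    ∃ x₁, x₀ ≤ x₁ ∧ Iic x₁ ∈ 𝓝 x₀ ∧ T x₁ y₀ < u := by
  by_cases h1 : x₀ = 1
  · refine ⟨1, le_one', ?_, h1 ▸ hu⟩
    have : Iic (1:I) = univ := eq_univ_of_forall fun w => le_one'
    rw [this]; exact univ_mem
  · have hx1 : x₀ < 1 := lt_of_le_of_ne le_one' h1
    have hg := sect_cont' hab hdisj hdef₁ hdef₂ y₀
    have hev : ∀ᶠ x' in 𝓝 x₀, T x' y₀ < u :=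
      (hg.tendsto x₀).eventually (eventually_lt_nhds hu)
    have hne : (𝓝[>] x₀).NeBot := nhdsGT_neBot_of_exists_gt ⟨1, hx1⟩
    have hev2 : ∀ᶠ x' in 𝓝[>] x₀, x' ∈ Ioi x₀ ∧ T x' y₀ < u :=
      (eventually_mem_nhdsWithin (s := Ioi x₀)).and (hev.filter_mono nhdsWithin_le_nhds)
    obtain ⟨x₁, hmem, hT⟩ := hev2.exists
    exact ⟨x₁, (le_of_lt hmem), Iic_mem_nhds hmem, hT⟩

include hab hdisj hdef₁ hdef₂ in
lemma young_lo {x₀ : I} (y₀ l : I) (hl : l < T x₀ y₀) :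
    ∃ x₁, x₁ ≤ x₀ ∧ Ici x₁ ∈ 𝓝 x₀ ∧ l < T x₁ y₀ := by
  by_cases h1 : x₀ = 0
  · refine ⟨0, nonneg', ?_, h1 ▸ hl⟩
    have : Ici (0:I) = univ := eq_univ_of_forall fun w => nonneg'
    rw [this]; exact univ_mem
  · have hx1 : 0 < x₀ := lt_of_le_of_ne nonneg' (Ne.symm h1)
    have hg := sect_cont' hab hdisj hdef₁ hdef₂ y₀
    have hev : ∀ᶠ x' in 𝓝 x₀, l < T x' y₀ :=
      (hg.tendsto x₀).eventually (eventually_gt_nhds hl)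
    have hne : (𝓝[<] x₀).NeBot := nhdsWithin_Iio_self_neBot' ⟨0, hx1⟩
    have hev2 : ∀ᶠ x' in 𝓝[<] x₀, x' ∈ Iio x₀ ∧ l < T x' y₀ :=
      (eventually_mem_nhdsWithin (s := Iio x₀)).and (hev.filter_mono nhdsWithin_le_nhds)
    obtain ⟨x₁, hmem, hT⟩ := hev2.exists
    exact ⟨x₁, (le_of_lt hmem), Ici_mem_nhds hmem, hT⟩

include hab hdisj hdef₁ hdef₂ in
lemma T_cont : Continuous (fun p : I × I => T p.1 p.2) := by
  rw [continuous_iff_continuousAt]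
  rintro ⟨x₀, y₀⟩
  have hcomm : ∀ u v : I, T u v = T v u := T_comm (t := t) hdef₁ hdef₂
  apply tendsto_order.2
  constructor
  · intro l hl
    obtain ⟨x₁, hx₁le, hx₁n, hx₁⟩ := young_lo hab hdisj hdef₁ hdef₂ y₀ l hl
    have hl' : l < T y₀ x₁ := hcomm x₁ y₀ ▸ hx₁
    obtain ⟨y₁, hy₁le, hy₁n, hy₁⟩ := young_lo hab hdisj hdef₁ hdef₂ x₁ l hl'
    filter_upwards [prod_mem_nhds hx₁n hy₁n] with p hp
    have : T x₁ y₁ ≤ T p.1 p.2 :=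
      T_mono hab hdisj hdef₁ hdef₂ hp.1 hp.2
    exact lt_of_lt_of_le (hcomm y₁ x₁ ▸ hy₁) this
  · intro u hu
    obtain ⟨x₁, hx₁le, hx₁n, hx₁⟩ := young_hi hab hdisj hdef₁ hdef₂ y₀ u hu
    have hu' : T y₀ x₁ < u := hcomm x₁ y₀ ▸ hx₁
    obtain ⟨y₁, hy₁le, hy₁n, hy₁⟩ := young_hi hab hdisj hdef₁ hdef₂ x₁ u hu'
    filter_upwards [prod_mem_nhds hx₁n hy₁n] with p hp
    have : T p.1 p.2 ≤ T x₁ y₁ :=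
      T_mono hab hdisj hdef₁ hdef₂ hp.1 hp.2
    exact lt_of_le_of_lt this (hcomm y₁ x₁ ▸ hy₁)

include hab hdef₁ hdef₂ in
lemma res_one {x y : I} (hxy : x ≤ y) : sSup {w : I | T x w ≤ y} = 1 := by
  apply le_antisymm
  · exact sSup_le fun w _ => le_one'
  · apply le_sSup
    show T x 1 ≤ y
    rw [T_comm (t := t) hdef₁ hdef₂, T_one hab hdef₁ hdef₂ x]
    exact hxy

include hab hdef₁ hdef₂ in
lemma res_min {x y : I} (hxy : ¬ x ≤ y)
    (h : ¬ ∃ i : ι, x ∈ Icc (a i) (b i) ∧ y ∈ Icc (a i) (b i)) :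
    sSup {w : I | T x w ≤ y} = y := by
  have hyx : y < x := not_le.1 hxy
  apply IsGreatest.csSup_eq
  constructor
  · show T x y ≤ y
    exact le_trans (T_le_min hab hdef₁ hdef₂ x y) (min_le_right _ _)
  · intro w hw
    by_contra hc
    push_neg at hc
    by_cases hk : ∃ k : ι, x ∈ Icc (a k) (b k) ∧ w ∈ Icc (a k) (b k)
    · obtain ⟨k, hxk, hwk⟩ := hk
      have h1 : a k ≤ T x w := T_lower hab hdef₁ hxk hwk
      have h2 : a k ≤ y := le_trans h1 hw
      exact h ⟨k, hxk, ⟨h2, le_trans hyx.le hxk.2⟩⟩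
    · have hw' : T x w ≤ y := hw
      rw [hdef₂ x w hk] at hw'
      rcases le_total x w with hxw | hwx
      · rw [min_eq_left hxw] at hw'; exact hxy hw'
      · rw [min_eq_right hwx] at hw'; exact absurd hw' (not_le.2 hc)

include hab hdisj hdef₁ hdef₂ in
lemma res_block {x y : I} {i : ι} (hxy : ¬ x ≤ y) (hx : x ∈ Icc (a i) (b i))
    (hy : y ∈ Icc (a i) (b i)) :
    ((sSup {w : I | T x w ≤ y} : I) : ℝ) = (a i : ℝ) + ((b i : ℝ) - (a i : ℝ)) *
      ((t i).hom (phi a b i x) (phi a b i y) : ℝ) := by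
  have hd := delta_pos hab i
  have hyx : y < x := not_le.1 hxy
  set h : I := (t i).hom (phi a b i x) (phi a b i y) with hh
  have hai : (0:ℝ) ≤ a i := (a i).2.1
  have hbi : (b i:ℝ) ≤ 1 := (b i).2.2
  have h0 : (0:ℝ) ≤ h := h.2.1
  have h1 : (h:ℝ) ≤ 1 := h.2.2
  have hmem : (a i : ℝ) + ((b i:ℝ) - (a i:ℝ)) * h ∈ Icc (0:ℝ) 1 := by
    constructor <;> nlinarith
  set c : I := ⟨(a i : ℝ) + ((b i:ℝ) - (a i:ℝ)) * h, hmem⟩ with hcdef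
  have hcm : c ∈ Icc (a i) (b i) := by
    constructor
    · rw [← Subtype.coe_le_coe]
      show (a i:ℝ) ≤ (a i : ℝ) + ((b i:ℝ) - (a i:ℝ)) * h
      nlinarith
    · rw [← Subtype.coe_le_coe]
      show (a i : ℝ) + ((b i:ℝ) - (a i:ℝ)) * h ≤ (b i:ℝ)
      nlinarith
  have hphic : phi a b i c = h := by
    apply Subtype.ext
    rw [phi_coe hab hcm]
    show ((a i : ℝ) + ((b i:ℝ) - (a i:ℝ)) * h - (a i:ℝ))/((b i:ℝ) - (a i:ℝ)) = h
    field_simp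
    ring
  have hgr : IsGreatest {w : I | T x w ≤ y} c := by
    constructor
    · show T x c ≤ y
      rw [← Subtype.coe_le_coe, Tblock (T := T) hdef₁ hx hcm, hphic]
      have h2 := Subtype.coe_le_coe.2 (tn_mul_hom_le (t i) (phi a b i x) (phi a b i y))
      have h3 := psi_phi hab hy
      rw [← hh] at h2
      nlinarith
    · intro w hw
      by_cases hwb : w ∈ Icc (a i) (b i)
      · have hmle : (t i).mul (phi a b i x) (phi a b i w) ≤ phi a b i y := by
          rw [← Subtype.coe_le_coe]
          have e1 := Tblock (T := T) hdef₁ hx hwb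
          have e2 := psi_phi hab hy
          have e3 := Subtype.coe_le_coe.2 (show T x w ≤ y from hw)
          nlinarith
        have hwh : phi a b i w ≤ h := tn_le_hom (t i) hmle
        rw [← Subtype.coe_le_coe]
        show (w:ℝ) ≤ (a i : ℝ) + ((b i:ℝ) - (a i:ℝ)) * h
        have e4 := psi_phi hab hwb
        have e5 := Subtype.coe_le_coe.2 hwh
        nlinarith
      · rcases lt_or_ge w (a i) with hlt | hge
        · exact le_trans hlt.le hcm.1
        · have hbw : b i < w := by
            by_contra hcb
            exact hwb ⟨hge, not_lt.1 hcb⟩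
          exfalso
          have hmm : T x w = min x w := by
            apply T_min hab hdef₁ hdef₂
            intro k hxk hwk
            have hik : i ≠ k := fun e => hwb (e ▸ hwk)
            rcases two_blocks hab hdisj hik hx hxk with he | he
            · exact Or.inl he
            · exact Or.inr (Or.inl he)
          have hw' : T x w ≤ y := hw
          rw [hmm, min_eq_left (le_trans hx.2 hbw.le)] at hw'
          exact hxy hw'
  rw [hgr.csSup_eq]

end blk
end OrdSum

/-- Continuous t-norms can be defined piecewise from a family of continuous t-norms
rescaled to intervals `[aᵢ, bᵢ]` whose interiors are pairwise disjoint, using `min`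
outside the blocks; the residuation of the resulting t-norm is computed casewise. -/
theorem tnorm_ordinal_sum {ι : Type*} (t : ι → ContinuousTNorm) (a b : ι → I)
    (hab : ∀ i, a i < b i)
    (hdisj : ∀ i j, i ≠ j → Set.Ioo (a i) (b i) ∩ Set.Ioo (a j) (b j) = ∅)
    (T : I → I → I)
    (hdef₁ : ∀ (i : ι) (x y : I), x ∈ Set.Icc (a i) (b i) → y ∈ Set.Icc (a i) (b i) →
      (T x y : ℝ) = (a i : ℝ) + ((b i : ℝ) - (a i : ℝ)) *
        ((t i).mul (clamp (((x : ℝ) - (a i : ℝ)) / ((b i : ℝ) - (a i : ℝ))))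
                   (clamp (((y : ℝ) - (a i : ℝ)) / ((b i : ℝ) - (a i : ℝ)))) : ℝ))
    (hdef₂ : ∀ x y : I, (¬ ∃ i : ι, x ∈ Set.Icc (a i) (b i) ∧ y ∈ Set.Icc (a i) (b i)) →
      T x y = min x y) :
    (∀ x y, T x y = T y x) ∧
    (∀ x y z, T (T x y) z = T x (T y z)) ∧
    (∀ x₁ x₂ y₁ y₂ : I, x₁ ≤ x₂ → y₁ ≤ y₂ → T x₁ y₁ ≤ T x₂ y₂) ∧
    Continuous (fun p : I × I => T p.1 p.2) ∧
    (∀ x, T 1 x = x) ∧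
    (∀ x y : I,
      (x ≤ y → sSup {w : I | T x w ≤ y} = 1) ∧
      (∀ i : ι, ¬ x ≤ y → x ∈ Set.Icc (a i) (b i) → y ∈ Set.Icc (a i) (b i) →
        ((sSup {w : I | T x w ≤ y} : I) : ℝ) = (a i : ℝ) + ((b i : ℝ) - (a i : ℝ)) *
          ((t i).hom (clamp (((x : ℝ) - (a i : ℝ)) / ((b i : ℝ) - (a i : ℝ))))
                     (clamp (((y : ℝ) - (a i : ℝ)) / ((b i : ℝ) - (a i : ℝ)))) : ℝ)) ∧
      (¬ x ≤ y → (¬ ∃ i : ι, x ∈ Set.Icc (a i) (b i) ∧ y ∈ Set.Icc (a i) (b i)) →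
        sSup {w : I | T x w ≤ y} = y)) := by
  refine ⟨OrdSum.T_comm (t := t) hdef₁ hdef₂,
    OrdSum.T_assoc hab hdisj hdef₁ hdef₂,
    fun x₁ x₂ y₁ y₂ h₁ h₂ => OrdSum.T_mono hab hdisj hdef₁ hdef₂ h₁ h₂,
    OrdSum.T_cont hab hdisj hdef₁ hdef₂,
    OrdSum.T_one hab hdef₁ hdef₂, ?_⟩
  intro x y
  exact ⟨fun hxy => OrdSum.res_one hab hdef₁ hdef₂ hxy,
    fun i hxy hx hy => OrdSum.res_block hab hdisj hdef₁ hdef₂ hxy hx hy,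
    fun hxy hno => OrdSum.res_min hab hdef₁ hdef₂ hxy hno⟩
end

section
/- Let X be a partially ordered compact space and let A, B ⊆ X be subsets such that A is a closed upper set, B is a closed lower set, and A ∩ B = ∅. Then there exists a continuous monotone function ψ : X → [0,1] such that ψ(x) = 1 for every x ∈ A and ψ(x) = 0 for every x ∈ B. -/
open unitInterval Set Filter Topology

namespace OrdUrysohns

variable {X : Type*} [TopologicalSpace X] [Preorder X]

/-- Ordered analogue of `Urysohns.CU`: a pair of a closed upper set `C` inside an open upper
set `U`, in a space where one can always insert an open upper set followed by a closed upper
set between a closed upper set and an open upper set containing it. -/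
structure CU (X : Type*) [TopologicalSpace X] [Preorder X] where
  protected C : Set X
  protected U : Set X
  protected closed_C : IsClosed C
  protected upper_C : IsUpperSet C
  protected open_U : IsOpen U
  protected upper_U : IsUpperSet U
  protected subset : C ⊆ U
  protected hP : ∀ {c u : Set X}, IsClosed c → IsUpperSet c → IsOpen u → IsUpperSet u → c ⊆ u →
      ∃ p : Set X × Set X, IsOpen p.1 ∧ IsUpperSet p.1 ∧ IsClosed p.2 ∧ IsUpperSet p.2 ∧
        c ⊆ p.1 ∧ p.1 ⊆ p.2 ∧ p.2 ⊆ u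

namespace CU

theorem exists_vw (c : CU X) :
    ∃ p : Set X × Set X, IsOpen p.1 ∧ IsUpperSet p.1 ∧ IsClosed p.2 ∧ IsUpperSet p.2 ∧
      c.C ⊆ p.1 ∧ p.1 ⊆ p.2 ∧ p.2 ⊆ c.U :=
  c.hP c.closed_C c.upper_C c.open_U c.upper_U c.subset

/-- The left child of `c`. -/
noncomputable def left (c : CU X) : CU X where
  C := c.C
  U := c.exists_vw.choose.1
  closed_C := c.closed_C
  upper_C := c.upper_C
  open_U := c.exists_vw.choose_spec.1
  upper_U := c.exists_vw.choose_spec.2.1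
  subset := c.exists_vw.choose_spec.2.2.2.2.1
  hP := c.hP

/-- The right child of `c`. -/
noncomputable def right (c : CU X) : CU X where
  C := c.exists_vw.choose.2
  U := c.U
  closed_C := c.exists_vw.choose_spec.2.2.1
  upper_C := c.exists_vw.choose_spec.2.2.2.1
  open_U := c.open_U
  upper_U := c.upper_U
  subset := c.exists_vw.choose_spec.2.2.2.2.2.2
  hP := c.hP

@[simp] theorem left_C (c : CU X) : c.left.C = c.C := rfl
@[simp] theorem right_U (c : CU X) : c.right.U = c.U := rfl

theorem left_U_subset_right_C (c : CU X) : c.left.U ⊆ c.right.C :=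
  c.exists_vw.choose_spec.2.2.2.2.2.1

theorem left_U_subset (c : CU X) : c.left.U ⊆ c.U :=
  Subset.trans c.left_U_subset_right_C c.right.subset

theorem subset_right_C (c : CU X) : c.C ⊆ c.right.C :=
  Subset.trans c.left.subset c.left_U_subset_right_C

/-- `n`-th approximation. -/
noncomputable def approx : ℕ → CU X → X → ℝ
  | 0, c, x => indicator c.Uᶜ 1 x
  | n + 1, c, x => midpoint ℝ (approx n c.left x) (approx n c.right x)

theorem approx_of_mem_C (c : CU X) (n : ℕ) {x : X} (hx : x ∈ c.C) : c.approx n x = 0 := by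
  induction n generalizing c with
  | zero => exact indicator_of_notMem (fun (hU : x ∈ c.Uᶜ) => hU <| c.subset hx) _
  | succ n ihn =>
    simp only [approx]
    rw [ihn, ihn, midpoint_self]
    exacts [c.subset_right_C hx, hx]

theorem approx_of_nmem_U (c : CU X) (n : ℕ) {x : X} (hx : x ∉ c.U) : c.approx n x = 1 := by
  induction n generalizing c with
  | zero =>
    rw [← mem_compl_iff] at hx
    exact indicator_of_mem hx _
  | succ n ihn =>
    simp only [approx]
    rw [ihn, ihn, midpoint_self]
    exacts [hx, fun hU => hx <| c.left_U_subset hU]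

theorem approx_nonneg (c : CU X) (n : ℕ) (x : X) : 0 ≤ c.approx n x := by
  induction n generalizing c with
  | zero => exact indicator_nonneg (fun _ _ => zero_le_one) _
  | succ n ihn =>
    simp only [approx, midpoint_eq_smul_add, invOf_eq_inv]
    refine mul_nonneg (inv_nonneg.2 zero_le_two) (add_nonneg ?_ ?_) <;> apply ihn

theorem approx_le_one (c : CU X) (n : ℕ) (x : X) : c.approx n x ≤ 1 := by
  induction n generalizing c with
  | zero => exact indicator_apply_le' (fun _ => le_rfl) fun _ => zero_le_one
  | succ n ihn =>
    simp only [approx, midpoint_eq_smul_add, invOf_eq_inv, smul_eq_mul, ← div_eq_inv_mul]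
    have := add_le_add (ihn (left c)) (ihn (right c))
    norm_num at this
    exact Iff.mpr (div_le_one zero_lt_two) this

theorem bddAbove_range_approx (c : CU X) (x : X) : BddAbove (range fun n => c.approx n x) :=
  ⟨1, fun _ ⟨n, hn⟩ => hn ▸ c.approx_le_one n x⟩

theorem approx_le_approx_of_U_sub_C {c₁ c₂ : CU X} (h : c₁.U ⊆ c₂.C) (n₁ n₂ : ℕ) (x : X) :
    c₂.approx n₂ x ≤ c₁.approx n₁ x := by
  by_cases hx : x ∈ c₁.U
  · calc
      approx n₂ c₂ x = 0 := approx_of_mem_C _ _ (h hx)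
      _ ≤ approx n₁ c₁ x := approx_nonneg _ _ _
  · calc
      approx n₂ c₂ x ≤ 1 := approx_le_one _ _ _
      _ = approx n₁ c₁ x := (approx_of_nmem_U _ _ hx).symm

theorem approx_mem_Icc_right_left (c : CU X) (n : ℕ) (x : X) :
    c.approx n x ∈ Icc (c.right.approx n x) (c.left.approx n x) := by
  induction' n with n ihn generalizing c
  · exact ⟨le_rfl, indicator_le_indicator_of_subset (compl_subset_compl.2 c.left_U_subset)
      (fun _ => zero_le_one) _⟩
  · simp only [approx, mem_Icc]
    refine ⟨midpoint_le_midpoint ?_ (ihn _).1, midpoint_le_midpoint (ihn _).2 ?_⟩ <;>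
      apply approx_le_approx_of_U_sub_C <;> apply left_U_subset_right_C

theorem approx_le_succ (c : CU X) (n : ℕ) (x : X) : c.approx n x ≤ c.approx (n + 1) x := by
  induction' n with n ihn generalizing c
  · simp only [approx, right_U, right_le_midpoint]
    exact (approx_mem_Icc_right_left c 0 x).2
  · rw [approx, approx]
    exact midpoint_le_midpoint (ihn _) (ihn _)

theorem approx_mono (c : CU X) (x : X) : Monotone fun n => c.approx n x :=
  monotone_nat_of_le_succ fun n => c.approx_le_succ n x

theorem approx_antitone (c : CU X) (n : ℕ) {x y : X} (hxy : x ≤ y) :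
    c.approx n y ≤ c.approx n x := by
  induction n generalizing c with
  | zero =>
    by_cases hx : x ∈ c.U
    · have hy : y ∈ c.U := c.upper_U hxy hx
      calc approx 0 c y = 0 := indicator_of_notMem (show y ∉ c.Uᶜ from fun h => h hy) _
        _ ≤ approx 0 c x := approx_nonneg _ _ _
    · calc approx 0 c y ≤ 1 := approx_le_one _ _ _
        _ = approx 0 c x := (approx_of_nmem_U _ _ hx).symm
  | succ n ihn =>
    simp only [approx]
    exact midpoint_le_midpoint (ihn _) (ihn _)

/-- The limit function. -/
protected noncomputable def lim (c : CU X) (x : X) : ℝ :=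
  ⨆ n, c.approx n x

theorem tendsto_approx_atTop (c : CU X) (x : X) :
    Tendsto (fun n => c.approx n x) atTop (𝓝 <| c.lim x) :=
  tendsto_atTop_ciSup (c.approx_mono x) ⟨1, fun _ ⟨_, hn⟩ => hn ▸ c.approx_le_one _ _⟩

theorem lim_of_mem_C (c : CU X) (x : X) (h : x ∈ c.C) : c.lim x = 0 := by
  simp only [CU.lim, approx_of_mem_C, h, ciSup_const]

theorem lim_of_nmem_U (c : CU X) (x : X) (h : x ∉ c.U) : c.lim x = 1 := by
  simp only [CU.lim, approx_of_nmem_U c _ h, ciSup_const]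

theorem lim_eq_midpoint (c : CU X) (x : X) :
    c.lim x = midpoint ℝ (c.left.lim x) (c.right.lim x) := by
  refine tendsto_nhds_unique (c.tendsto_approx_atTop x) ((tendsto_add_atTop_iff_nat 1).1 ?_)
  simp only [approx]
  exact (c.left.tendsto_approx_atTop x).midpoint (c.right.tendsto_approx_atTop x)

theorem approx_le_lim (c : CU X) (x : X) (n : ℕ) : c.approx n x ≤ c.lim x :=
  le_ciSup (c.bddAbove_range_approx x) _

theorem lim_nonneg (c : CU X) (x : X) : 0 ≤ c.lim x :=
  (c.approx_nonneg 0 x).trans (c.approx_le_lim x 0)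

theorem lim_le_one (c : CU X) (x : X) : c.lim x ≤ 1 :=
  ciSup_le fun _ => c.approx_le_one _ _

theorem lim_mem_Icc (c : CU X) (x : X) : c.lim x ∈ Icc (0 : ℝ) 1 :=
  ⟨c.lim_nonneg x, c.lim_le_one x⟩

theorem lim_antitone (c : CU X) {x y : X} (hxy : x ≤ y) : c.lim y ≤ c.lim x :=
  ciSup_le fun n => (c.approx_antitone n hxy).trans (c.approx_le_lim x n)

/-- Continuity of `lim`. -/
theorem continuous_lim (c : CU X) : Continuous c.lim := by
  obtain ⟨h0, h1234, h1⟩ : 0 < (2⁻¹ : ℝ) ∧ (2⁻¹ : ℝ) < 3 / 4 ∧ (3 / 4 : ℝ) < 1 := by norm_num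
  refine
    continuous_iff_continuousAt.2 fun x =>
      (Metric.nhds_basis_closedBall_pow (h0.trans h1234) h1).tendsto_right_iff.2 fun n _ => ?_
  simp only [Metric.mem_closedBall]
  induction' n with n ihn generalizing c
  · filter_upwards with y
    rw [pow_zero]
    exact Real.dist_le_of_mem_Icc_01 (c.lim_mem_Icc _) (c.lim_mem_Icc _)
  · by_cases hxl : x ∈ c.left.U
    · filter_upwards [IsOpen.mem_nhds c.left.open_U hxl, ihn c.left] with _ hyl hyd
      rw [pow_succ', c.lim_eq_midpoint, c.lim_eq_midpoint,
        c.right.lim_of_mem_C _ (c.left_U_subset_right_C hyl),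
        c.right.lim_of_mem_C _ (c.left_U_subset_right_C hxl)]
      refine (dist_midpoint_midpoint_le _ _ _ _).trans ?_
      rw [dist_self, add_zero, div_eq_inv_mul]
      gcongr
    · replace hxl : x ∈ c.left.right.Cᶜ :=
        compl_subset_compl.2 c.left.right.subset hxl
      filter_upwards [IsOpen.mem_nhds (isOpen_compl_iff.2 c.left.right.closed_C) hxl,
        ihn c.left.right, ihn c.right] with y hyl hydl hydr
      replace hxl : x ∉ c.left.left.U :=
        compl_subset_compl.2 c.left.left_U_subset_right_C hxl
      replace hyl : y ∉ c.left.left.U :=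
        compl_subset_compl.2 c.left.left_U_subset_right_C hyl
      simp only [pow_succ, c.lim_eq_midpoint, c.left.lim_eq_midpoint,
        c.left.left.lim_of_nmem_U _ hxl, c.left.left.lim_of_nmem_U _ hyl]
      refine (dist_midpoint_midpoint_le _ _ _ _).trans ?_
      refine (div_le_div_of_nonneg_right (add_le_add (dist_midpoint_midpoint_le _ _ _ _) le_rfl)
        zero_le_two).trans ?_
      rw [dist_self, zero_add]
      set r := (3 / 4 : ℝ) ^ n
      calc _ ≤ (r / 2 + r) / 2 := by gcongr
        _ = _ := by field_simp; ring

end CU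

end OrdUrysohns

section Nachbin

variable {X : Type*} [TopologicalSpace X] [CompactSpace X] [PartialOrder X]
  (hle : IsClosed {p : X × X | p.1 ≤ p.2})

include hle

omit [CompactSpace X] in
theorem nachbin_t2 : T2Space X := by
  rw [t2_iff_isClosed_diagonal]
  have h2 : IsClosed {p : X × X | p.2 ≤ p.1} :=
    hle.preimage continuous_swap
  have : diagonal X = {p : X × X | p.1 ≤ p.2} ∩ {p : X × X | p.2 ≤ p.1} := by
    ext p
    simp [Set.diagonal, le_antisymm_iff, eq_comm]
  rw [this]
  exact hle.inter h2

theorem nachbin_isClosed_upset {D : Set X} (hD : IsClosed D) :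
    IsClosed {x : X | ∃ d ∈ D, d ≤ x} := by
  have : T2Space X := nachbin_t2 hle
  have heq : {x : X | ∃ d ∈ D, d ≤ x} =
      Prod.snd '' ({p : X × X | p.1 ≤ p.2} ∩ D ×ˢ univ) := by
    ext x
    constructor
    · rintro ⟨d, hd, hdx⟩
      exact ⟨(d, x), ⟨hdx, hd, trivial⟩, rfl⟩
    · rintro ⟨⟨d, y⟩, ⟨hdy, hd, -⟩, rfl⟩
      exact ⟨d, hd, hdy⟩
  rw [heq]
  exact (((hle.inter (hD.prod isClosed_univ)).isCompact).image continuous_snd).isClosed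

theorem nachbin_isClosed_downset {D : Set X} (hD : IsClosed D) :
    IsClosed {x : X | ∃ d ∈ D, x ≤ d} := by
  have : T2Space X := nachbin_t2 hle
  have heq : {x : X | ∃ d ∈ D, x ≤ d} =
      Prod.fst '' ({p : X × X | p.1 ≤ p.2} ∩ univ ×ˢ D) := by
    ext x
    constructor
    · rintro ⟨d, hd, hxd⟩
      exact ⟨(x, d), ⟨hxd, trivial, hd⟩, rfl⟩
    · rintro ⟨⟨y, d⟩, ⟨hyd, -, hd⟩, rfl⟩
      exact ⟨d, hd, hyd⟩
  rw [heq]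
  exact (((hle.inter (isClosed_univ.prod hD)).isCompact).image continuous_fst).isClosed

/-- The key insertion property: between a closed upper set and an open upper set containing it,
one can insert an open upper set followed by a closed upper set. -/
theorem nachbin_insertion :
    ∀ {c u : Set X}, IsClosed c → IsUpperSet c → IsOpen u → IsUpperSet u → c ⊆ u →
      ∃ p : Set X × Set X, IsOpen p.1 ∧ IsUpperSet p.1 ∧ IsClosed p.2 ∧ IsUpperSet p.2 ∧
        c ⊆ p.1 ∧ p.1 ⊆ p.2 ∧ p.2 ⊆ u := by
  intro c u hc hcu hou huu hsub
  have : T2Space X := nachbin_t2 hle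
  -- no point of c is ≤ a point of uᶜ
  have hprod : c ×ˢ uᶜ ⊆ {p : X × X | p.1 ≤ p.2}ᶜ := by
    rintro ⟨a, b⟩ ⟨ha, hb⟩ hab
    exact hb (huu hab (hsub ha))
  obtain ⟨U₁, V₁, hU₁, hV₁, hcU₁, hucV₁, hUV⟩ :=
    generalized_tube_lemma hc.isCompact hou.isClosed_compl.isCompact
      hle.isOpen_compl hprod
  -- shrink U₁ to U₂ with closure U₂ ⊆ U₁
  obtain ⟨U₂, hU₂, hcU₂, hclU₂⟩ := normal_exists_closure_subset hc hU₁ hcU₁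
  set D := closure U₂ with hD
  -- the closed upper set w
  set w : Set X := {x : X | ∃ d ∈ D, d ≤ x} with hw
  have hwclosed : IsClosed w := nachbin_isClosed_upset hle isClosed_closure
  have hwupper : IsUpperSet w := by
    rintro x y hxy ⟨d, hd, hdx⟩
    exact ⟨d, hd, hdx.trans hxy⟩
  have hwu : w ⊆ u := by
    rintro x ⟨d, hd, hdx⟩
    by_contra hxu
    exact hUV (Set.mk_mem_prod (hclU₂ hd) (hucV₁ hxu)) hdx
  -- the open upper set v
  set v : Set X := {x : X | ∃ d ∈ U₂ᶜ, x ≤ d}ᶜ with hv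
  have hvopen : IsOpen v := (nachbin_isClosed_downset hle hU₂.isClosed_compl).isOpen_compl
  have hvupper : IsUpperSet v := by
    intro x y hxy hx
    rintro ⟨d, hd, hyd⟩
    exact hx ⟨d, hd, hxy.trans hyd⟩
  have hcv : c ⊆ v := by
    intro x hx
    rintro ⟨d, hd, hxd⟩
    exact hd (hcU₂ (hcu hxd hx))
  have hvw : v ⊆ w := by
    intro x hx
    have hxU₂ : x ∈ U₂ := by
      by_contra hxn
      exact hx ⟨x, hxn, le_refl x⟩
    exact ⟨x, subset_closure hxU₂, le_refl x⟩
  exact ⟨(v, w), hvopen, hvupper, hwclosed, hwupper, hcv, hvw, hwu⟩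

end Nachbin

/-- Nachbin separation: in a partially ordered compact space, a closed upper set and a
disjoint closed lower set can be separated by a continuous monotone map into `[0,1]`. -/
theorem posComp_urysohn {X : Type*} [TopologicalSpace X] [CompactSpace X] [PartialOrder X]
    (hle : IsClosed {p : X × X | p.1 ≤ p.2})
    (A B : Set X) (hA : IsClosed A) (hAu : IsUpperSet A)
    (hB : IsClosed B) (hBl : IsLowerSet B) (hAB : A ∩ B = ∅) :
    ∃ ψ : X → I, Continuous ψ ∧ Monotone ψ ∧ (∀ x ∈ A, ψ x = 1) ∧ (∀ x ∈ B, ψ x = 0) := by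
  have : T2Space X := nachbin_t2 hle
  set c : OrdUrysohns.CU X :=
    { C := A
      U := Bᶜ
      closed_C := hA
      upper_C := hAu
      open_U := hB.isOpen_compl
      upper_U := hBl.compl
      subset := fun x hx hxB => (Set.eq_empty_iff_forall_notMem.1 hAB x) ⟨hx, hxB⟩
      hP := fun hc hcu hou huu hsub => nachbin_insertion hle hc hcu hou huu hsub }
  refine ⟨fun x => ⟨1 - c.lim x, ?_, ?_⟩, ?_, ?_, ?_, ?_⟩
  · have := c.lim_le_one x; linarith
  · have := c.lim_nonneg x; linarith
  · exact Continuous.subtype_mk (continuous_const.sub c.continuous_lim) _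
  · intro x y hxy
    have := c.lim_antitone hxy
    simp only [Subtype.mk_le_mk]
    change (1 - c.lim x : ℝ) ≤ 1 - c.lim y
    linarith
  · intro x hx
    have h0 : c.lim x = 0 := c.lim_of_mem_C x hx
    simp [h0]
  · intro x hx
    have h1 : c.lim x = 1 := c.lim_of_nmem_U x (fun h => h hx)
    simp [h1]
end

section
/- Let X be a partially ordered compact space. Then the continuous monotone maps X → [0,1] form a point-separating and order-initial family: for all x, y ∈ X, x ≤ y holds if and only if ψ(x) ≤ ψ(y) for every continuous monotone map ψ : X → [0,1]. In particular, for x ≠ y there is a continuous monotone ψ : X → [0,1] with ψ(x) ≠ ψ(y). -/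
open unitInterval Set



namespace Nachbin

variable {X : Type*} [TopologicalSpace X] [Preorder X]

/-- Ordered analogue of `Urysohns.CU`. -/
structure OCU (X : Type*) [TopologicalSpace X] [Preorder X] where
  protected C : Set X
  protected U : Set X
  protected closed_C : IsClosed C
  protected upper_C : IsUpperSet C
  protected open_U : IsOpen U
  protected upper_U : IsUpperSet U
  protected subset : C ⊆ U
  protected hP : ∀ {c u : Set X}, IsClosed c → IsUpperSet c → IsOpen u → IsUpperSet u → c ⊆ u →
    ∃ p : Set X × Set X, IsOpen p.1 ∧ IsUpperSet p.1 ∧ IsClosed p.2 ∧ IsUpperSet p.2 ∧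
      c ⊆ p.1 ∧ p.1 ⊆ p.2 ∧ p.2 ⊆ u

namespace OCU

noncomputable def left (c : OCU X) : OCU X where
  C := c.C
  U := (c.hP c.closed_C c.upper_C c.open_U c.upper_U c.subset).choose.1
  closed_C := c.closed_C
  upper_C := c.upper_C
  open_U := (c.hP c.closed_C c.upper_C c.open_U c.upper_U c.subset).choose_spec.1
  upper_U := (c.hP c.closed_C c.upper_C c.open_U c.upper_U c.subset).choose_spec.2.1
  subset := (c.hP c.closed_C c.upper_C c.open_U c.upper_U c.subset).choose_spec.2.2.2.2.1
  hP := c.hP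

noncomputable def right (c : OCU X) : OCU X where
  C := (c.hP c.closed_C c.upper_C c.open_U c.upper_U c.subset).choose.2
  U := c.U
  closed_C := (c.hP c.closed_C c.upper_C c.open_U c.upper_U c.subset).choose_spec.2.2.1
  upper_C := (c.hP c.closed_C c.upper_C c.open_U c.upper_U c.subset).choose_spec.2.2.2.1
  open_U := c.open_U
  upper_U := c.upper_U
  subset := (c.hP c.closed_C c.upper_C c.open_U c.upper_U c.subset).choose_spec.2.2.2.2.2.2
  hP := c.hP

theorem right_U (c : OCU X) : c.right.U = c.U := rfl

theorem left_U_subset_right_C (c : OCU X) : c.left.U ⊆ c.right.C :=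
  (c.hP c.closed_C c.upper_C c.open_U c.upper_U c.subset).choose_spec.2.2.2.2.2.1

theorem left_U_subset (c : OCU X) : c.left.U ⊆ c.U :=
  Subset.trans c.left_U_subset_right_C c.right.subset

theorem subset_right_C (c : OCU X) : c.C ⊆ c.right.C :=
  Subset.trans c.left.subset c.left_U_subset_right_C

noncomputable def approx : ℕ → OCU X → X → ℝ
  | 0, c, x => indicator c.Uᶜ 1 x
  | n + 1, c, x => midpoint ℝ (approx n c.left x) (approx n c.right x)

theorem approx_of_mem_C (c : OCU X) (n : ℕ) {x : X} (hx : x ∈ c.C) : c.approx n x = 0 := by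
  induction n generalizing c with
  | zero => exact indicator_of_notMem (fun (hU : x ∈ c.Uᶜ) => hU <| c.subset hx) _
  | succ n ihn =>
    simp only [approx]
    rw [ihn, ihn, midpoint_self]
    exacts [c.subset_right_C hx, hx]

theorem approx_of_nmem_U (c : OCU X) (n : ℕ) {x : X} (hx : x ∉ c.U) : c.approx n x = 1 := by
  induction n generalizing c with
  | zero =>
    rw [← mem_compl_iff] at hx
    exact indicator_of_mem hx _
  | succ n ihn =>
    simp only [approx]
    rw [ihn, ihn, midpoint_self]
    exacts [hx, fun hU => hx <| c.left_U_subset hU]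

theorem approx_nonneg (c : OCU X) (n : ℕ) (x : X) : 0 ≤ c.approx n x := by
  induction n generalizing c with
  | zero => exact indicator_nonneg (fun _ _ => zero_le_one) _
  | succ n ihn =>
    simp only [approx, midpoint_eq_smul_add, invOf_eq_inv]
    refine mul_nonneg (inv_nonneg.2 zero_le_two) (add_nonneg ?_ ?_) <;> apply ihn

theorem approx_le_one (c : OCU X) (n : ℕ) (x : X) : c.approx n x ≤ 1 := by
  induction n generalizing c with
  | zero => exact indicator_apply_le' (fun _ => le_rfl) fun _ => zero_le_one
  | succ n ihn =>
    simp only [approx, midpoint_eq_smul_add, invOf_eq_inv, smul_eq_mul, ← div_eq_inv_mul]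
    have := add_le_add (ihn (left c)) (ihn (right c))
    norm_num at this
    exact Iff.mpr (div_le_one zero_lt_two) this

theorem approx_antitone (c : OCU X) (n : ℕ) : Antitone (c.approx n) := by
  induction n generalizing c with
  | zero =>
    intro x y hxy
    simp only [approx]
    by_cases hy : y ∈ c.U
    · by_cases hx : x ∈ c.U
      · simp [hx, hy]
      · simp only [indicator]
        split <;> split <;> simp_all [zero_le_one, le_refl]
    · have hx : x ∉ c.U := fun hx => hy (c.upper_U hxy hx)
      simp [indicator_of_mem, hx, hy, mem_compl_iff]
  | succ n ihn =>
    intro x y hxy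
    simp only [approx]
    exact midpoint_le_midpoint (ihn c.left hxy) (ihn c.right hxy)

theorem bddAbove_range_approx (c : OCU X) (x : X) : BddAbove (range fun n => c.approx n x) :=
  ⟨1, fun _ ⟨n, hn⟩ => hn ▸ c.approx_le_one n x⟩

theorem approx_le_approx_of_U_sub_C {c₁ c₂ : OCU X} (h : c₁.U ⊆ c₂.C) (n₁ n₂ : ℕ) (x : X) :
    c₂.approx n₂ x ≤ c₁.approx n₁ x := by
  by_cases hx : x ∈ c₁.U
  · calc
      approx n₂ c₂ x = 0 := approx_of_mem_C _ _ (h hx)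
      _ ≤ approx n₁ c₁ x := approx_nonneg _ _ _
  · calc
      approx n₂ c₂ x ≤ 1 := approx_le_one _ _ _
      _ = approx n₁ c₁ x := (approx_of_nmem_U _ _ hx).symm

theorem approx_mem_Icc_right_left (c : OCU X) (n : ℕ) (x : X) :
    c.approx n x ∈ Icc (c.right.approx n x) (c.left.approx n x) := by
  induction' n with n ihn generalizing c
  · exact ⟨le_rfl, indicator_le_indicator_of_subset (compl_subset_compl.2 c.left_U_subset)
      (fun _ => zero_le_one) _⟩
  · simp only [approx, mem_Icc]
    refine ⟨midpoint_le_midpoint ?_ (ihn _).1, midpoint_le_midpoint (ihn _).2 ?_⟩ <;>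
      apply approx_le_approx_of_U_sub_C
    exacts [left_U_subset_right_C _, left_U_subset_right_C _]

theorem approx_le_succ (c : OCU X) (n : ℕ) (x : X) : c.approx n x ≤ c.approx (n + 1) x := by
  induction' n with n ihn generalizing c
  · simp only [approx, right_U, right_le_midpoint]
    exact (approx_mem_Icc_right_left c 0 x).2
  · rw [approx, approx]
    exact midpoint_le_midpoint (ihn _) (ihn _)

theorem approx_mono (c : OCU X) (x : X) : Monotone fun n => c.approx n x :=
  monotone_nat_of_le_succ fun n => c.approx_le_succ n x

protected noncomputable def lim (c : OCU X) (x : X) : ℝ :=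
  ⨆ n, c.approx n x

open Filter in
theorem tendsto_approx_atTop (c : OCU X) (x : X) :
    Tendsto (fun n => c.approx n x) atTop (nhds <| c.lim x) :=
  tendsto_atTop_ciSup (c.approx_mono x) ⟨1, fun _ ⟨_, hn⟩ => hn ▸ c.approx_le_one _ _⟩

theorem lim_of_mem_C (c : OCU X) (x : X) (h : x ∈ c.C) : c.lim x = 0 := by
  simp only [OCU.lim, approx_of_mem_C, h, ciSup_const]

theorem lim_of_nmem_U (c : OCU X) (x : X) (h : x ∉ c.U) : c.lim x = 1 := by
  simp only [OCU.lim, approx_of_nmem_U c _ h, ciSup_const]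

theorem lim_eq_midpoint (c : OCU X) (x : X) :
    c.lim x = midpoint ℝ (c.left.lim x) (c.right.lim x) := by
  refine tendsto_nhds_unique (c.tendsto_approx_atTop x) ((Filter.tendsto_add_atTop_iff_nat 1).1 ?_)
  simp only [approx]
  exact (c.left.tendsto_approx_atTop x).midpoint (c.right.tendsto_approx_atTop x)

theorem approx_le_lim (c : OCU X) (x : X) (n : ℕ) : c.approx n x ≤ c.lim x :=
  le_ciSup (c.bddAbove_range_approx x) _

theorem lim_nonneg (c : OCU X) (x : X) : 0 ≤ c.lim x :=
  (c.approx_nonneg 0 x).trans (c.approx_le_lim x 0)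

theorem lim_le_one (c : OCU X) (x : X) : c.lim x ≤ 1 :=
  ciSup_le fun _ => c.approx_le_one _ _

theorem lim_mem_Icc (c : OCU X) (x : X) : c.lim x ∈ Icc (0 : ℝ) 1 :=
  ⟨c.lim_nonneg x, c.lim_le_one x⟩

theorem lim_antitone (c : OCU X) : Antitone c.lim := fun x y hxy =>
  ciSup_mono (c.bddAbove_range_approx x) fun n => c.approx_antitone n hxy

theorem continuous_lim (c : OCU X) : Continuous c.lim := by
  obtain ⟨h0, h1234, h1⟩ : 0 < (2⁻¹ : ℝ) ∧ (2⁻¹ : ℝ) < 3 / 4 ∧ (3 / 4 : ℝ) < 1 := by norm_num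
  refine
    continuous_iff_continuousAt.2 fun x =>
      (Metric.nhds_basis_closedBall_pow (h0.trans h1234) h1).tendsto_right_iff.2 fun n _ => ?_
  simp only [Metric.mem_closedBall]
  induction' n with n ihn generalizing c
  · filter_upwards with y
    rw [pow_zero]
    exact Real.dist_le_of_mem_Icc_01 (c.lim_mem_Icc _) (c.lim_mem_Icc _)
  · by_cases hxl : x ∈ c.left.U
    · filter_upwards [IsOpen.mem_nhds c.left.open_U hxl, ihn c.left] with _ hyl hyd
      rw [pow_succ', c.lim_eq_midpoint, c.lim_eq_midpoint,
        c.right.lim_of_mem_C _ (c.left_U_subset_right_C hyl),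
        c.right.lim_of_mem_C _ (c.left_U_subset_right_C hxl)]
      refine (dist_midpoint_midpoint_le _ _ _ _).trans ?_
      rw [dist_self, add_zero, div_eq_inv_mul]
      gcongr
    · replace hxl : x ∈ c.left.right.Cᶜ :=
        compl_subset_compl.2 c.left.right.subset hxl
      filter_upwards [IsOpen.mem_nhds (isOpen_compl_iff.2 c.left.right.closed_C) hxl,
        ihn c.left.right, ihn c.right] with y hyl hydl hydr
      replace hxl : x ∉ c.left.left.U :=
        compl_subset_compl.2 c.left.left_U_subset_right_C hxl
      replace hyl : y ∉ c.left.left.U :=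
        compl_subset_compl.2 c.left.left_U_subset_right_C hyl
      simp only [pow_succ, c.lim_eq_midpoint, c.left.lim_eq_midpoint,
        c.left.left.lim_of_nmem_U _ hxl, c.left.left.lim_of_nmem_U _ hyl]
      refine (dist_midpoint_midpoint_le _ _ _ _).trans ?_
      refine (div_le_div_of_nonneg_right (add_le_add (dist_midpoint_midpoint_le _ _ _ _) le_rfl)
        zero_le_two).trans ?_
      rw [dist_self, zero_add]
      set r := (3 / 4 : ℝ) ^ n
      calc _ ≤ (r / 2 + r) / 2 := by gcongr
        _ = _ := by field_simp; ring

end OCU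

section Pospace

variable {X : Type*} [TopologicalSpace X] [CompactSpace X] [PartialOrder X]

theorem t2_of_closed_le (hle : IsClosed {p : X × X | p.1 ≤ p.2}) : T2Space X := by
  rw [t2_iff_isClosed_diagonal]
  have h : diagonal X = {p : X × X | p.1 ≤ p.2} ∩ {p : X × X | p.2 ≤ p.1} := by
    ext ⟨a, b⟩
    constructor
    · intro h; obtain rfl : a = b := h; exact ⟨le_rfl, le_rfl⟩
    · rintro ⟨h1, h2⟩; exact le_antisymm h1 h2
  rw [h]
  exact hle.inter (hle.preimage continuous_swap)

theorem isClosed_upClos (hle : IsClosed {p : X × X | p.1 ≤ p.2}) {B : Set X} (hB : IsClosed B) :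
    IsClosed {x | ∃ b ∈ B, b ≤ x} := by
  haveI := t2_of_closed_le hle
  have h : {x | ∃ b ∈ B, b ≤ x} =
      Prod.snd '' ({p : X × X | p.1 ≤ p.2} ∩ B ×ˢ univ) := by
    ext x
    constructor
    · rintro ⟨b, hb, hbx⟩; exact ⟨(b, x), ⟨hbx, hb, trivial⟩, rfl⟩
    · rintro ⟨⟨a, b⟩, ⟨h1, h2, -⟩, rfl⟩; exact ⟨a, h2, h1⟩
  rw [h]
  exact (((hle.inter (hB.prod isClosed_univ)).isCompact).image continuous_snd).isClosed

theorem isClosed_downClos (hle : IsClosed {p : X × X | p.1 ≤ p.2}) {B : Set X} (hB : IsClosed B) :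
    IsClosed {x | ∃ b ∈ B, x ≤ b} := by
  haveI := t2_of_closed_le hle
  have h : {x | ∃ b ∈ B, x ≤ b} =
      Prod.fst '' ({p : X × X | p.1 ≤ p.2} ∩ univ ×ˢ B) := by
    ext x
    constructor
    · rintro ⟨b, hb, hbx⟩; exact ⟨(x, b), ⟨hbx, trivial, hb⟩, rfl⟩
    · rintro ⟨⟨a, b⟩, ⟨h1, -, h2⟩, rfl⟩; exact ⟨b, h2, h1⟩
  rw [h]
  exact (((hle.inter (isClosed_univ.prod hB)).isCompact).image continuous_fst).isClosed

/-- Nachbin interpolation: between a closed upper set and an open upper superset one can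
insert an open upper set followed by a closed upper set. -/
theorem nachbin_interp (hle : IsClosed {p : X × X | p.1 ≤ p.2}) :
    ∀ {c u : Set X}, IsClosed c → IsUpperSet c → IsOpen u → IsUpperSet u → c ⊆ u →
    ∃ p : Set X × Set X, IsOpen p.1 ∧ IsUpperSet p.1 ∧ IsClosed p.2 ∧ IsUpperSet p.2 ∧
      c ⊆ p.1 ∧ p.1 ⊆ p.2 ∧ p.2 ⊆ u := by
  intro c u hc hcu hu huu hsub
  -- `c ×ˢ uᶜ` misses the order relation
  have hdisj : c ×ˢ uᶜ ⊆ {p : X × X | p.1 ≤ p.2}ᶜ := by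
    rintro ⟨a, b⟩ ⟨ha, hb⟩ (hab : a ≤ b)
    exact hb (huu hab (hsub ha))
  obtain ⟨U, V, hUo, hVo, hcU, huV, hUV⟩ :=
    generalized_tube_lemma hc.isCompact (hu.isClosed_compl.isCompact)
      hle.isOpen_compl hdisj
  -- no point of `U` lies below a point of `V`
  have key : ∀ ⦃a⦄, a ∈ U → ∀ ⦃b⦄, b ∈ V → ¬ a ≤ b := fun a ha b hb hab =>
    hUV (mk_mem_prod ha hb) hab
  refine ⟨({x | ∃ b ∈ Uᶜ, x ≤ b}ᶜ, {x | ∃ b ∈ Vᶜ, b ≤ x}), ?_, ?_, ?_, ?_, ?_, ?_, ?_⟩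
  · exact (isClosed_downClos hle hUo.isClosed_compl).isOpen_compl
  · intro x y hxy hx ⟨b, hb, hyb⟩
    exact hx ⟨b, hb, hxy.trans hyb⟩
  · exact isClosed_upClos hle hVo.isClosed_compl
  · rintro x y hxy ⟨b, hb, hbx⟩
    exact ⟨b, hb, hbx.trans hxy⟩
  · intro a ha ⟨b, hb, hab⟩
    exact hb (hcU (hcu hab ha))
  · intro x hx
    have hxU : x ∈ U := by
      by_contra hxU
      exact hx ⟨x, hxU, le_rfl⟩
    have hxV : x ∉ V := fun hxV => key hxU hxV le_rfl
    exact ⟨x, hxV, le_rfl⟩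
  · rintro x ⟨b, hb, hbx⟩ -- show x ∈ u
    by_contra hxu
    exact hb (huV (fun hbu => hxu (huu hbx hbu)))

/-- The key separation: if `¬ x ≤ y` there is a continuous monotone map to `[0,1]`
which is `1` at `x` and `0` at `y`. -/
theorem nachbin_sep (hle : IsClosed {p : X × X | p.1 ≤ p.2}) {x y : X} (hxy : ¬ x ≤ y) :
    ∃ f : X → ℝ, Continuous f ∧ Antitone f ∧ (∀ z, f z ∈ Icc (0 : ℝ) 1) ∧ f x = 0 ∧ f y = 1 := by
  haveI := t2_of_closed_le hle
  set c : OCU X :=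
    { C := {z | x ≤ z}
      U := {z | ∃ b ∈ ({y} : Set X), z ≤ b}ᶜ
      closed_C := hle.preimage (Continuous.prodMk_right x)
      upper_C := fun a b hab (ha : x ≤ a) => ha.trans hab
      open_U := (isClosed_downClos hle isClosed_singleton).isOpen_compl
      upper_U := fun a b hab ha ⟨s, hs, hbs⟩ => ha ⟨s, hs, hab.trans hbs⟩
      subset := by
        rintro z (hz : x ≤ z) ⟨s, rfl : s = y, hzs⟩
        · exact hxy (hz.trans hzs)
      hP := fun {c u} hc hcu hu huu hsub => nachbin_interp hle hc hcu hu huu hsub }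
  refine ⟨c.lim, c.continuous_lim, c.lim_antitone, c.lim_mem_Icc, ?_, ?_⟩
  · exact c.lim_of_mem_C x le_rfl
  · exact c.lim_of_nmem_U y (fun h => h ⟨y, rfl, le_rfl⟩)

end Pospace

end Nachbin

/-- For a partially ordered compact space `X`, the continuous monotone maps `X → [0,1]`
form a point-separating and order-initial family. -/
theorem posComp_initial_cogenerator {X : Type*} [TopologicalSpace X] [CompactSpace X]
    [PartialOrder X] (hle : IsClosed {p : X × X | p.1 ≤ p.2}) :
    (∀ x y : X, x ≤ y ↔ ∀ ψ : X → I, Continuous ψ → Monotone ψ → ψ x ≤ ψ y) ∧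
    (∀ x y : X, x ≠ y → ∃ ψ : X → I, Continuous ψ ∧ Monotone ψ ∧ ψ x ≠ ψ y) := by
  have key : ∀ x y : X, ¬ x ≤ y →
      ∃ ψ : X → I, Continuous ψ ∧ Monotone ψ ∧ ψ x = 1 ∧ ψ y = 0 := by
    intro x y hxy
    obtain ⟨f, hf, hanti, hmem, hfx, hfy⟩ := Nachbin.nachbin_sep hle hxy
    refine ⟨fun z => ⟨1 - f z, ?_, ?_⟩, ?_, ?_, ?_, ?_⟩
    · exact sub_nonneg.2 (hmem z).2
    · exact sub_le_self _ (hmem z).1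
    · exact Continuous.subtype_mk (continuous_const.sub hf) _
    · intro a b hab
      exact Subtype.mk_le_mk.mpr (sub_le_sub_left (hanti hab) 1)
    · ext; simp [hfx]
    · ext; simp [hfy]
  constructor
  · intro x y
    constructor
    · intro h ψ _ hmono; exact hmono h
    · intro h
      by_contra hxy
      obtain ⟨ψ, hc, hm, hx1, hy0⟩ := key x y hxy
      have := h ψ hc hm
      rw [hx1, hy0] at this
      exact (lt_irrefl (0 : I)) (lt_of_lt_of_le zero_lt_one this)
  · intro x y hne
    rcases Classical.em (x ≤ y) with h | h
    · have h2 : ¬ y ≤ x := fun h2 => hne (le_antisymm h h2)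
      obtain ⟨ψ, hc, hm, hx1, hy0⟩ := key y x h2
      exact ⟨ψ, hc, hm, by rw [hx1, hy0]; exact zero_ne_one⟩
    · obtain ⟨ψ, hc, hm, hx1, hy0⟩ := key x y h
      exact ⟨ψ, hc, hm, by rw [hx1, hy0]; exact one_ne_zero⟩
end
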